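/- arXiv:1401.1143 — 5 statements merged into one kernel-verified Lean document; each statement's English description precedes it below -/
import Mathlib

section
/- Let E be a Hilbert C*-module over a C*-algebra A and let M ⊆ E be a closed subspace invariant under all 'rank one' operators θ_{η,ξ}(x) = η⟨ξ,x⟩. Define J(M) as the closed linear span of {⟨η, m⟩ : η ∈ E, m ∈ M}. Then J(M) is a closed left ideal of the C*-algebra closure of ⟨E,E⟩, and M = E(J(M)) (the closed span of {ξa : ξ ∈ E, a ∈ J(M)}). -/
open scoped InnerProductSpace RightActions
open Filter Topology

/-- The December-2024 Mathlib `CStarModule`: a right `A`-module (via `Aᵐᵒᵖ`) with an `A`-valued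
inner product, linear in the second argument, satisfying `⟪x, y <• a⟫ = ⟪x, y⟫ * a`. -/
class RightCStarModule (A E : Type*) [NonUnitalSemiring A] [StarRing A] [Module ℂ A]
    [AddCommGroup E] [Module ℂ E] [PartialOrder A] [SMul Aᵐᵒᵖ E] [Norm A] [Norm E]
    extends Inner A E where
  inner_add_right {x} {y} {z} : inner x (y + z) = inner x y + inner x z
  inner_self_nonneg {x} : 0 ≤ inner x x
  inner_self {x} : inner x x = 0 ↔ x = 0
  inner_op_smul_right {a : A} {x y : E} : inner x (y <• a) = inner x y * a
  inner_smul_right_complex {z : ℂ} {x} {y} : inner x (z • y) = z • inner x y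
  star_inner x y : star (inner x y) = inner y x
  norm_eq_sqrt_norm_inner_self x : ‖x‖ = √‖inner x x‖

section Defs

variable (A : Type*) (E : Type*) [NonUnitalCStarAlgebra A] [PartialOrder A] [StarOrderedRing A]
  [NormedAddCommGroup E] [NormedSpace ℂ E] [SMul Aᵐᵒᵖ E] [RightCStarModule A E]

/-- An operator on a Hilbert C*-module is *adjointable* if it admits an adjoint with respect to
the `A`-valued inner product. -/
def Adjointable (T : E →L[ℂ] E) : Prop :=
  ∃ S : E →L[ℂ] E, ∀ x y : E, ⟪T x, y⟫_A = ⟪x, S y⟫_A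

/-- `EJ A E J` is the closed linear span `E(J)` of `{ξ • a : ξ ∈ E, a ∈ J}`. -/
noncomputable def EJ (J : Set A) : Submodule ℂ E :=
  (Submodule.span ℂ {y : E | ∃ ξ : E, ∃ a ∈ J, y = ξ <• a}).topologicalClosure

/-- `JM A E M` is the closed linear span `J(M)` of `{⟪η, m⟫ : η ∈ E, m ∈ M}`. -/
noncomputable def JM (M : Set E) : Submodule ℂ A :=
  (Submodule.span ℂ {a : A | ∃ η : E, ∃ m ∈ M, a = ⟪η, m⟫_A}).topologicalClosure

/-- `BS A E` is the C*-algebra `B`, the closure of the linear span of all inner products. -/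
noncomputable def BS : Set A :=
  closure (Submodule.span ℂ {a : A | ∃ η ξ : E, a = ⟪η, ξ⟫_A} : Set A)

/-- `KE A E` is `K(E)`, the closed (non-unital) algebra generated by the rank-one operators
`θ_{η,ξ} : x ↦ η • ⟪ξ, x⟫`. -/
noncomputable def KE : NonUnitalSubalgebra ℂ (E →L[ℂ] E) :=
  (NonUnitalAlgebra.adjoin ℂ
    {T : E →L[ℂ] E | ∃ η ξ : E, ∀ x : E, T x = η <• ⟪ξ, x⟫_A}).topologicalClosure

end Defs

namespace RightCStarModule

set_option linter.unusedSectionVars false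

variable {A E : Type*} [NonUnitalCStarAlgebra A] [PartialOrder A] [StarOrderedRing A]
  [NormedAddCommGroup E] [NormedSpace ℂ E] [SMul Aᵐᵒᵖ E] [RightCStarModule A E]

lemma inner_zero_right' {x : E} : ⟪x, (0 : E)⟫_A = 0 := by
  have h := RightCStarModule.inner_add_right (A := A) (x := x) (y := (0 : E)) (z := 0)
  rw [add_zero] at h
  calc ⟪x, (0 : E)⟫_A = (⟪x, (0 : E)⟫_A + ⟪x, (0 : E)⟫_A) - ⟪x, (0 : E)⟫_A := by abel
  _ = ⟪x, (0 : E)⟫_A - ⟪x, (0 : E)⟫_A := by rw [← h]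
  _ = 0 := sub_self _

lemma inner_neg_right' {x y : E} : ⟪x, -y⟫_A = -⟪x, y⟫_A := by
  have h := RightCStarModule.inner_add_right (A := A) (x := x) (y := y) (z := -y)
  rw [add_neg_cancel, inner_zero_right'] at h
  exact (neg_eq_of_add_eq_zero_right h.symm).symm

lemma inner_sub_right {x y z : E} : ⟪x, y - z⟫_A = ⟪x, y⟫_A - ⟪x, z⟫_A := by
  rw [sub_eq_add_neg, RightCStarModule.inner_add_right, inner_neg_right', ← sub_eq_add_neg]

lemma inner_sub_left {x y z : E} : ⟪x - y, z⟫_A = ⟪x, z⟫_A - ⟪y, z⟫_A := by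
  rw [← RightCStarModule.star_inner (A := A) z (x - y), inner_sub_right, star_sub,
    RightCStarModule.star_inner, RightCStarModule.star_inner]

lemma inner_op_smul_left {a : A} {x y : E} : ⟪x <• a, y⟫_A = star a * ⟪x, y⟫_A := by
  rw [← RightCStarModule.star_inner (A := A) y (x <• a), RightCStarModule.inner_op_smul_right,
    star_mul, RightCStarModule.star_inner]

lemma norm_sq_eq {x : E} : ‖x‖ ^ 2 = ‖⟪x, x⟫_A‖ := by
  rw [RightCStarModule.norm_eq_sqrt_norm_inner_self (A := A) x, Real.sq_sqrt (norm_nonneg _)]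

end RightCStarModule

section Aux

set_option linter.unusedSectionVars false

variable {A E : Type*} [NonUnitalCStarAlgebra A] [PartialOrder A] [StarOrderedRing A]
  [NormedAddCommGroup E] [NormedSpace ℂ E] [SMul Aᵐᵒᵖ E] [RightCStarModule A E]

lemma aux_ext_inner {u v : E} (h : ∀ z : E, ⟪z, u⟫_A = ⟪z, v⟫_A) : u = v := by
  have h2 := h (u - v)
  have : ⟪u - v, u - v⟫_A = 0 := by rw [RightCStarModule.inner_sub_right, h2, sub_self]
  exact sub_eq_zero.mp (RightCStarModule.inner_self.mp this)

lemma aux_op_smul_add (ξ : E) (a b : A) : ξ <• (a + b) = ξ <• a + ξ <• b :=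
  aux_ext_inner fun z => by
    rw [RightCStarModule.inner_op_smul_right, RightCStarModule.inner_add_right,
      RightCStarModule.inner_op_smul_right, RightCStarModule.inner_op_smul_right, mul_add]

lemma aux_op_smul_csmul (ξ : E) (c : ℂ) (a : A) : ξ <• (c • a) = c • (ξ <• a) :=
  aux_ext_inner fun z => by
    rw [RightCStarModule.inner_op_smul_right, RightCStarModule.inner_smul_right_complex,
      RightCStarModule.inner_op_smul_right, mul_smul_comm]

/-- `a ↦ ξ <• a` as a linear map. -/
noncomputable def auxOpSmulL (ξ : E) : A →ₗ[ℂ] E where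
  toFun a := ξ <• a
  map_add' := aux_op_smul_add ξ
  map_smul' := aux_op_smul_csmul ξ

lemma aux_norm_op_smul_le (ξ : E) (a : A) : ‖ξ <• a‖ ≤ ‖ξ‖ * ‖a‖ := by
  have h1 : ‖ξ <• a‖ ^ 2 = ‖star a * ⟪ξ, ξ⟫_A * a‖ := by
    rw [RightCStarModule.norm_sq_eq (A := A)]
    congr 1
    rw [RightCStarModule.inner_op_smul_right, RightCStarModule.inner_op_smul_left, mul_assoc]
  have h2 : ‖star a * ⟪ξ, ξ⟫_A * a‖ ≤ ‖a‖ * (‖ξ‖^2 * ‖a‖) := by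
    calc ‖star a * ⟪ξ, ξ⟫_A * a‖ ≤ ‖star a * ⟪ξ, ξ⟫_A‖ * ‖a‖ := norm_mul_le _ _
    _ ≤ ‖star a‖ * ‖⟪ξ, ξ⟫_A‖ * ‖a‖ := by gcongr; exact norm_mul_le _ _
    _ = ‖a‖ * (‖ξ‖^2 * ‖a‖) := by rw [norm_star, ← RightCStarModule.norm_sq_eq]; ring
  nlinarith [norm_nonneg (ξ <• a), mul_nonneg (norm_nonneg ξ) (norm_nonneg a)]

noncomputable def auxOpSmulCLM (ξ : E) : A →L[ℂ] E :=
  (auxOpSmulL ξ).mkContinuous ‖ξ‖ (aux_norm_op_smul_le ξ)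

lemma aux_continuous_op_smul (ξ : E) : Continuous (fun a : A => ξ <• a) :=
  (auxOpSmulCLM ξ).continuous

/-- generating set of `JM` for a set `T ⊆ E`. -/
def genJ (T : Set E) : Set A := {a : A | ∃ η : E, ∃ m ∈ T, a = ⟪η, m⟫_A}

lemma span_mul_span_mem {T : Set E} (hT : ∀ (β η : E), ∀ t ∈ T, β <• ⟪η, t⟫_A ∈ T)
    {b j : A} (hb : b ∈ Submodule.span ℂ (genJ (A := A) (Set.univ : Set E)))
    (hj : j ∈ Submodule.span ℂ (genJ (A := A) T)) :
    b * j ∈ Submodule.span ℂ (genJ (A := A) T) := by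
  induction hb using Submodule.span_induction with
  | mem b hbmem =>
    obtain ⟨α, β, -, rfl⟩ := hbmem
    have key : Submodule.span ℂ (genJ (A := A) T) ≤
        (Submodule.span ℂ (genJ (A := A) T)).comap (LinearMap.mulLeft ℂ (⟪α, β⟫_A)) := by
      rw [Submodule.span_le]
      rintro j' ⟨η, t, ht, rfl⟩
      refine Submodule.subset_span ⟨α, β <• ⟪η, t⟫_A, hT β η t ht, ?_⟩
      simp [LinearMap.mulLeft_apply, RightCStarModule.inner_op_smul_right]
    exact key hj
  | zero => rw [zero_mul]; exact zero_mem _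
  | add x y hx hy hx' hy' => rw [add_mul]; exact add_mem hx' hy'
  | smul c x hx hx' => rw [smul_mul_assoc]; exact Submodule.smul_mem _ _ hx'

lemma mul_mem_closure_span {T : Set E} (hT : ∀ (β η : E), ∀ t ∈ T, β <• ⟪η, t⟫_A ∈ T)
    {b j : A} (hb : b ∈ closure (Submodule.span ℂ (genJ (A := A) (Set.univ : Set E)) : Set A))
    (hj : j ∈ closure (Submodule.span ℂ (genJ (A := A) T) : Set A)) :
    b * j ∈ closure (Submodule.span ℂ (genJ (A := A) T) : Set A) := by
  have step1 : ∀ j' ∈ (Submodule.span ℂ (genJ (A := A) T) : Set A),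
      b * j' ∈ closure (Submodule.span ℂ (genJ (A := A) T) : Set A) := by
    intro j' hj'
    have := map_mem_closure (continuous_mul_right j') hb
      (fun b' hb' => subset_closure (span_mul_span_mem hT hb' hj'))
    simpa using this
  have := map_mem_closure (continuous_mul_left b) hj step1
  simpa [closure_closure] using this

open scoped ContinuousMapZero in
lemma cfcₙHom_mem {x : A} (hx : IsSelfAdjoint x) (J B : Submodule ℂ A)
    (hJc : IsClosed (J : Set A)) (hBc : IsClosed (B : Set A))
    (hxJ : x ∈ J) (hxB : x ∈ B)
    (hBJ : ∀ b ∈ B, ∀ j ∈ J, b * j ∈ J) (hBB : ∀ b ∈ B, ∀ b' ∈ B, b * b' ∈ B)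
    (f : C(quasispectrum ℝ x, ℝ)₀) : cfcₙHom hx f ∈ J ∧ cfcₙHom hx f ∈ B := by
  have h0 : ((0 : quasispectrum ℝ x) : ℝ) = 0 := rfl
  induction f using ContinuousMapZero.induction_on_of_compact with
  | zero => rw [map_zero]; exact ⟨zero_mem _, zero_mem _⟩
  | id =>
    have hid : (ContinuousMapZero.id (quasispectrum ℝ x) : C(quasispectrum ℝ x, ℝ)₀) =
        ⟨(ContinuousMap.id ℝ).restrict (quasispectrum ℝ x), rfl⟩ := rfl
    rw [cfcₙHom_id hx]; exact ⟨hxJ, hxB⟩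
  | star_id =>
    have hid : (ContinuousMapZero.id (quasispectrum ℝ x) : C(quasispectrum ℝ x, ℝ)₀) =
        ⟨(ContinuousMap.id ℝ).restrict (quasispectrum ℝ x), rfl⟩ := rfl
    rw [star_trivial, cfcₙHom_id hx]; exact ⟨hxJ, hxB⟩
  | add f g hf hg => rw [map_add]; exact ⟨add_mem hf.1 hg.1, add_mem hf.2 hg.2⟩
  | mul f g hf hg => rw [map_mul]; exact ⟨hBJ _ hf.2 _ hg.1, hBB _ hf.2 _ hg.2⟩
  | smul r f hf =>
    rw [map_smul]
    exact ⟨Submodule.smul_of_tower_mem _ r hf.1, Submodule.smul_of_tower_mem _ r hf.2⟩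
  | frequently f hf =>
    have hmem : f ∈ closure {g | cfcₙHom hx g ∈ J ∧ cfcₙHom hx g ∈ B} :=
      mem_closure_iff_frequently.mpr hf
    have hclosed : IsClosed {g : C(quasispectrum ℝ x, ℝ)₀ |
        cfcₙHom hx g ∈ J ∧ cfcₙHom hx g ∈ B} := by
      rw [Set.setOf_and]
      exact (hJc.preimage (cfcₙHom_continuous hx)).inter (hBc.preimage (cfcₙHom_continuous hx))
    rwa [hclosed.closure_eq] at hmem

lemma approx_key {x : A} (hx0 : 0 ≤ x) {c : ℝ} (hc : 0 < c) :
    IsSelfAdjoint (cfcₙ (fun t : ℝ => t / (c + t)) x) ∧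
    ‖cfcₙ (fun t : ℝ => t / (c + t)) x * x * cfcₙ (fun t : ℝ => t / (c + t)) x
      - cfcₙ (fun t : ℝ => t / (c + t)) x * x - x * cfcₙ (fun t : ℝ => t / (c + t)) x + x‖ ≤ c := by
  have hx : IsSelfAdjoint x := .of_nonneg hx0
  set f : ℝ → ℝ := fun t => t / (c + t) with hf
  have hσ : ∀ t ∈ quasispectrum ℝ x, 0 ≤ t := quasispectrum_nonneg_of_nonneg x hx0
  have hfc : ContinuousOn f (quasispectrum ℝ x) := by
    apply ContinuousOn.div continuousOn_id (by fun_prop)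
    intro t ht
    have := hσ t ht
    positivity
  have hf0 : f 0 = 0 := by simp [hf]
  refine ⟨cfcₙ_predicate f x, ?_⟩
  set a := cfcₙ f x with ha
  have hid : ContinuousOn (id : ℝ → ℝ) (quasispectrum ℝ x) := continuousOn_id
  have hp1c : ContinuousOn (fun t : ℝ => t * f t) (quasispectrum ℝ x) := continuousOn_id.mul hfc
  have hp2c : ContinuousOn (fun t : ℝ => f t * t) (quasispectrum ℝ x) := hfc.mul continuousOn_id
  have hp3c : ContinuousOn (fun t : ℝ => f t * (t * f t)) (quasispectrum ℝ x) := hfc.mul hp1c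
  have h1 : cfcₙ (fun t : ℝ => t * f t) x = x * a := by
    rw [cfcₙ_mul (fun t : ℝ => t) f x hid (by simp) hfc hf0, cfcₙ_id' ℝ x]
  have h2 : cfcₙ (fun t : ℝ => f t * (t * f t)) x = a * (x * a) := by
    rw [cfcₙ_mul f (fun t : ℝ => t * f t) x hfc hf0 hp1c (by simp [hf0]), h1]
  have h3 : cfcₙ (fun t : ℝ => f t * t) x = a * x := by
    rw [cfcₙ_mul f (fun t : ℝ => t) x hfc hf0 hid (by simp), cfcₙ_id' ℝ x]
  have key : a * (x * a) - a * x - x * a + x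
      = cfcₙ (fun t : ℝ => f t * (t * f t) - f t * t - t * f t + t) x := by
    rw [cfcₙ_add (fun t : ℝ => f t * (t * f t) - f t * t - t * f t) (fun t : ℝ => t) x ((hp3c.sub hp2c).sub hp1c)
      (by simp [hf0]) hid (by simp),
      cfcₙ_sub (fun t : ℝ => f t * (t * f t) - f t * t) (fun t : ℝ => t * f t) x (hp3c.sub hp2c) (by simp [hf0]) hp1c (by simp [hf0]),
      cfcₙ_sub (fun t : ℝ => f t * (t * f t)) (fun t : ℝ => f t * t) x hp3c (by simp [hf0]) hp2c (by simp [hf0]),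
      h1, h2, h3, cfcₙ_id' ℝ x]
  have hbound : ∀ t ∈ quasispectrum ℝ x, ‖f t * (t * f t) - f t * t - t * f t + t‖ ≤ c := by
    intro t ht
    have ht0 := hσ t ht
    have hs : 0 < c + t := by linarith
    have hval : f t * (t * f t) - f t * t - t * f t + t = t * c ^ 2 / (c + t) ^ 2 := by
      simp only [hf]
      field_simp
      ring
    rw [hval, Real.norm_eq_abs, abs_of_nonneg (by positivity), div_le_iff₀ (by positivity)]
    nlinarith [mul_nonneg (mul_nonneg hc.le hc.le) hc.le,
      mul_nonneg (mul_nonneg hc.le hc.le) ht0, mul_nonneg (mul_nonneg hc.le ht0) ht0]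
  have hassoc : a * x * a - a * x - x * a + x = a * (x * a) - a * x - x * a + x := by
    rw [mul_assoc]
  rw [hassoc, key]
  exact norm_cfcₙ_le hbound

end Aux

variable {A E : Type*} [NonUnitalCStarAlgebra A] [PartialOrder A] [StarOrderedRing A]
  [NormedAddCommGroup E] [NormedSpace ℂ E] [SMul Aᵐᵒᵖ E] [RightCStarModule A E]

/-- If `M` is a closed subspace of `E` invariant under all rank-one operators
`θ_{η,ξ} : x ↦ η • ⟪ξ, x⟫`, then `J(M)`, the closed span of `{⟪η, m⟫ : η ∈ E, m ∈ M}`, is a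
closed left ideal of `B = closure span ⟪E,E⟫`, and `M = E(J(M))`. -/
theorem JM_left_ideal_and_M_eq_EJ_JM (M : Submodule ℂ E) (hMclosed : IsClosed (M : Set E))
    (hMinv : ∀ η ξ : E, ∀ m ∈ M, η <• ⟪ξ, m⟫_A ∈ M) :
    ((JM A E (M : Set E) : Set A) ⊆ BS A E) ∧
    (∀ b ∈ BS A E, ∀ j ∈ JM A E (M : Set E), b * j ∈ JM A E (M : Set E)) ∧
    EJ A E (JM A E (M : Set E) : Set A) = M := by
  -- identifications of the sets involved
  have hgenM : {a : A | ∃ η : E, ∃ m ∈ (M : Set E), a = ⟪η, m⟫_A} = genJ (A := A) (M : Set E) :=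
    rfl
  have hgenU : {a : A | ∃ η ξ : E, a = ⟪η, ξ⟫_A} = genJ (A := A) (Set.univ : Set E) := by
    ext a
    simp [genJ]
  have hJMset : (JM A E (M : Set E) : Set A)
      = closure (Submodule.span ℂ (genJ (A := A) (M : Set E)) : Set A) := rfl
  have hBSset : BS A E
      = closure (Submodule.span ℂ (genJ (A := A) (Set.univ : Set E)) : Set A) := by
    rw [BS, hgenU]
  have hTM : ∀ (β η : E), ∀ t ∈ (M : Set E), β <• ⟪η, t⟫_A ∈ (M : Set E) :=
    fun β η t ht => hMinv β η t ht
  have hTU : ∀ (β η : E), ∀ t ∈ (Set.univ : Set E), β <• ⟪η, t⟫_A ∈ (Set.univ : Set E) :=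
    fun _ _ _ _ => Set.mem_univ _
  have hJMclosed : IsClosed (JM A E (M : Set E) : Set A) := by
    rw [hJMset]; exact isClosed_closure
  -- Part 1 : JM ⊆ BS
  have part1 : (JM A E (M : Set E) : Set A) ⊆ BS A E := by
    rw [hJMset, hBSset]
    apply closure_mono
    exact_mod_cast Submodule.span_mono (by rintro a ⟨η, m, hm, rfl⟩; exact ⟨η, m, trivial, rfl⟩)
  -- Part 2 : left ideal property
  have part2 : ∀ b ∈ BS A E, ∀ j ∈ JM A E (M : Set E), b * j ∈ JM A E (M : Set E) := by
    intro b hb j hj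
    rw [hBSset] at hb
    have hj' : j ∈ closure (Submodule.span ℂ (genJ (A := A) (M : Set E)) : Set A) := hj
    have := mul_mem_closure_span hTM hb hj'
    exact this
  refine ⟨part1, part2, ?_⟩
  -- Part 3
  apply le_antisymm
  · -- EJ (JM M) ≤ M
    refine Submodule.topologicalClosure_minimal _ (t := M) ?_ hMclosed
    rw [Submodule.span_le]
    rintro y ⟨ξ, a, ha, rfl⟩
    have hmaps : ∀ j ∈ (Submodule.span ℂ (genJ (A := A) (M : Set E)) : Set A),
        ξ <• j ∈ (M : Set E) := by
      intro j hj
      have hle : Submodule.span ℂ (genJ (A := A) (M : Set E)) ≤ M.comap (auxOpSmulL ξ) := by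
        rw [Submodule.span_le]
        rintro j' ⟨η, m, hm, rfl⟩
        exact hMinv ξ η m hm
      exact hle hj
    have := map_mem_closure (aux_continuous_op_smul ξ) (hJMset ▸ ha) hmaps
    rwa [hMclosed.closure_eq] at this
  · -- M ≤ EJ (JM M)
    intro m hm
    set x : A := ⟪m, m⟫_A with hxdef
    have hx0 : (0 : A) ≤ x := RightCStarModule.inner_self_nonneg
    have hx : IsSelfAdjoint x := .of_nonneg hx0
    -- x belongs to both JM and the (submodule version of) BS
    set Bsub : Submodule ℂ A :=
      (Submodule.span ℂ (genJ (A := A) (Set.univ : Set E))).topologicalClosure with hBsub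
    have hBsubset : (Bsub : Set A) = BS A E := by rw [hBSset]; rfl
    have hBsubclosed : IsClosed (Bsub : Set A) := Submodule.isClosed_topologicalClosure _
    have hxJ : x ∈ JM A E (M : Set E) :=
      Submodule.le_topologicalClosure _ (Submodule.subset_span ⟨m, m, hm, rfl⟩)
    have hxB : x ∈ Bsub :=
      Submodule.le_topologicalClosure _ (Submodule.subset_span ⟨m, m, trivial, rfl⟩)
    have hBJ : ∀ b ∈ Bsub, ∀ j ∈ JM A E (M : Set E), b * j ∈ JM A E (M : Set E) := by
      intro b hb j hj
      exact part2 b (hBsubset ▸ hb) j hj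
    have hBB : ∀ b ∈ Bsub, ∀ b' ∈ Bsub, b * b' ∈ Bsub := by
      intro b hb b' hb'
      exact mul_mem_closure_span hTU hb hb'
    -- the approximating elements
    have hσ : ∀ t ∈ quasispectrum ℝ x, 0 ≤ t := quasispectrum_nonneg_of_nonneg x hx0
    have memJ : ∀ n : ℕ, cfcₙ (fun t : ℝ => t / (((n : ℝ) + 1)⁻¹ + t)) x ∈ JM A E (M : Set E) := by
      intro n
      have hc : (0 : ℝ) < ((n : ℝ) + 1)⁻¹ := by positivity
      have hfc : ContinuousOn (fun t : ℝ => t / (((n : ℝ) + 1)⁻¹ + t)) (quasispectrum ℝ x) := by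
        apply ContinuousOn.div continuousOn_id (by fun_prop)
        intro t ht
        have := hσ t ht
        positivity
      have hf0 : (fun t : ℝ => t / (((n : ℝ) + 1)⁻¹ + t)) 0 = 0 := by simp
      rw [cfcₙ_apply _ x hfc hf0 hx]
      exact (cfcₙHom_mem hx (JM A E (M : Set E)) Bsub hJMclosed hBsubclosed hxJ hxB hBJ hBB _).1
    -- the approximation estimate
    have hest : ∀ n : ℕ,
        ‖m <• cfcₙ (fun t : ℝ => t / (((n : ℝ) + 1)⁻¹ + t)) x - m‖ ≤ √(((n : ℝ) + 1)⁻¹) := by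
      intro n
      have hc : (0 : ℝ) < ((n : ℝ) + 1)⁻¹ := by positivity
      obtain ⟨hsa, hnorm⟩ := approx_key (A := A) hx0 hc
      set a := cfcₙ (fun t : ℝ => t / (((n : ℝ) + 1)⁻¹ + t)) x with hadef
      have hinner : ⟪m <• a - m, m <• a - m⟫_A = a * x * a - a * x - x * a + x := by
        simp only [RightCStarModule.inner_sub_right, RightCStarModule.inner_sub_left,
          RightCStarModule.inner_op_smul_right, RightCStarModule.inner_op_smul_left, hsa.star_eq]
        rw [← hxdef]
        noncomm_ring
      have hnormsq : ‖m <• a - m‖ ^ 2 ≤ ((n : ℝ) + 1)⁻¹ := by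
        rw [RightCStarModule.norm_sq_eq (A := A), hinner]
        exact hnorm
      calc ‖m <• a - m‖ = √(‖m <• a - m‖ ^ 2) := by
            rw [Real.sqrt_sq (norm_nonneg _)]
        _ ≤ √(((n : ℝ) + 1)⁻¹) := Real.sqrt_le_sqrt hnormsq
    -- conclude by taking limits
    have hmemEJ : ∀ n : ℕ,
        m <• cfcₙ (fun t : ℝ => t / (((n : ℝ) + 1)⁻¹ + t)) x
          ∈ EJ A E (JM A E (M : Set E) : Set A) := by
      intro n
      exact Submodule.le_topologicalClosure _
        (Submodule.subset_span ⟨m, _, memJ n, rfl⟩)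
    have htendsto : Tendsto
        (fun n : ℕ => m <• cfcₙ (fun t : ℝ => t / (((n : ℝ) + 1)⁻¹ + t)) x) atTop (𝓝 m) := by
      rw [tendsto_iff_norm_sub_tendsto_zero]
      apply squeeze_zero (fun n => norm_nonneg _) hest
      have h1 : Tendsto (fun n : ℕ => ((n : ℝ) + 1)⁻¹) atTop (𝓝 0) :=
        tendsto_one_div_add_atTop_nhds_zero_nat.congr (by intro n; rw [one_div])
      have := (Real.continuous_sqrt.tendsto' 0 0 (by simp)).comp h1
      exact this
    have hclosedEJ : IsClosed (EJ A E (JM A E (M : Set E) : Set A) : Set E) :=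
      Submodule.isClosed_topologicalClosure _
    have : m ∈ closure (EJ A E (JM A E (M : Set E) : Set A) : Set E) :=
      mem_closure_of_tendsto htendsto (Filter.Eventually.of_forall fun n => hmemEJ n)
    rwa [hclosedEJ.closure_eq] at this
end

section
/- Let E be a Hilbert C*-module over a C*-algebra A and let J be a closed left ideal of the C*-algebra B = closure of span⟨E,E⟩. Then J = J(E(J)), i.e., J equals the closed linear span of {⟨η, m⟩ : η ∈ E, m ∈ E(J)}, where E(J) is the closed span of {ξa : ξ ∈ E, a ∈ J}. -/
open scoped InnerProductSpace RightActions
open Filter Topology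

variable {A E : Type*} [NonUnitalCStarAlgebra A] [PartialOrder A] [StarOrderedRing A]
  [NormedAddCommGroup E] [NormedSpace ℂ E] [SMul Aᵐᵒᵖ E] [RightCStarModule A E]


section Aux

lemma norm_inner_le_right (x y : E) : ‖⟪x, y⟫_A‖ ≤ ‖x‖ * ‖y‖ := by
  letI : CStarModule Aᵐᵒᵖ E :=
    { inner := fun x y => MulOpposite.op ⟪x, y⟫_A
      inner_add_right := by
        intro x y z; simp [RightCStarModule.inner_add_right]
      inner_self_nonneg := by
        intro x; exact (RightCStarModule.inner_self_nonneg (A := A) (x := x))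
      inner_self := by
        intro x; simp [RightCStarModule.inner_self (A := A)]
      inner_op_smul_right := by
        intro a x y
        show MulOpposite.op ⟪x, y <• a.unop⟫_A = a * MulOpposite.op ⟪x, y⟫_A
        rw [RightCStarModule.inner_op_smul_right]; rfl
      inner_smul_right_complex := by
        intro z x y; simp [RightCStarModule.inner_smul_right_complex]
      star_inner := by
        intro x y; exact congrArg MulOpposite.op (RightCStarModule.star_inner x y)
      norm_eq_sqrt_norm_inner_self := by
        intro x; simp [RightCStarModule.norm_eq_sqrt_norm_inner_self (A := A) x]; rfl }
  have := CStarModule.norm_inner_le (A := Aᵐᵒᵖ) E (x := x) (y := y)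
  exact this

open Polynomial


-- real scalar bound
lemma real_bound {M x : ℝ} (hM : 0 ≤ M) (hx0 : 0 ≤ x) (hx : x ≤ M) (n : ℕ) (hn : 1 ≤ n) :
    |x * (1 - (M + 1)⁻¹ * x) ^ (2 * n)| ≤ (M + 1) / (2 * n) := by
  have hM1 : (0:ℝ) < M + 1 := by linarith
  set c : ℝ := (M + 1)⁻¹ with hc
  have hc0 : 0 < c := inv_pos.mpr hM1
  have hs0 : 0 ≤ c * x := by positivity
  have hs1 : c * x ≤ 1 := by
    rw [hc, inv_mul_le_iff₀ hM1]; linarith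
  have hbase0 : 0 ≤ 1 - c * x := by linarith
  rw [abs_of_nonneg (by positivity)]
  rcases eq_or_lt_of_le hx0 with h0 | hxpos
  · rw [← h0, zero_mul]; positivity
  · have h1 : (1 - c * x) ^ (2*n) ≤ Real.exp (-(c*x)) ^ (2*n) := by
      apply pow_le_pow_left₀ hbase0
      have := Real.add_one_le_exp (-(c*x))
      linarith
    have h2 : Real.exp (-(c*x)) ^ (2*n) = Real.exp (-(2*n*(c*x))) := by
      rw [← Real.exp_nat_mul]
      congr 1
      push_cast
      ring
    have h3 : Real.exp (-(2*n*(c*x))) ≤ (2*n*(c*x))⁻¹ := by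
      rw [Real.exp_neg]
      have hpos : 0 < 2*n*(c*x) := by
        have : (0:ℝ) < n := by exact_mod_cast hn
        positivity
      apply inv_anti₀ hpos
      have := Real.add_one_le_exp (2*n*(c*x))
      linarith
    have hn0 : (0:ℝ) < 2 * n := by
      have : (0:ℝ) < n := by exact_mod_cast hn
      positivity
    calc x * (1 - c * x) ^ (2*n) ≤ x * (2*n*(c*x))⁻¹ := by
          apply mul_le_mul_of_nonneg_left _ hx0
          exact (h1.trans_eq h2).trans h3
      _ = (M+1)/(2*n) := by
          rw [hc]; field_simp

variable {A : Type*} [NonUnitalCStarAlgebra A] [PartialOrder A] [StarOrderedRing A]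

noncomputable def seqU (b : A) (c : ℝ) : ℕ → A
  | 0 => 0
  | n + 1 => (c : ℂ) • b + seqU b c n - ((c : ℂ) • b) * seqU b c n

lemma seqU_inr (b : A) (c : ℝ) (n : ℕ) :
    (1 : Unitization ℂ A) - ((seqU b c n : A) : Unitization ℂ A) =
      ((1 : Unitization ℂ A) - (c : ℂ) • (b : Unitization ℂ A)) ^ n := by
  induction n with
  | zero => simp [seqU]
  | succ n ih =>
    rw [pow_succ', ← ih, seqU, Unitization.inr_sub, Unitization.inr_add, Unitization.inr_mul,
      Unitization.inr_smul]
    noncomm_ring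



lemma inr_mul_seqU_sub (j : A) (c : ℝ) (n : ℕ) :
    (↑(j * seqU (star j * j) c n - j) : Unitization ℂ A) =
      -((j : Unitization ℂ A) *
        ((1 : Unitization ℂ A) - (c : ℂ) • ((star j * j : A) : Unitization ℂ A)) ^ n) := by
  rw [← seqU_inr, Unitization.inr_sub, Unitization.inr_mul]
  noncomm_ring

lemma seqU_norm_sq_le (j : A) {n : ℕ} (hn : 1 ≤ n) :
    ‖j * seqU (star j * j) (‖star j * j‖ + 1)⁻¹ n - j‖ ^ 2 ≤ (‖star j * j‖ + 1) / (2 * n) := by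
  have hM : (0:ℝ) ≤ ‖star j * j‖ := norm_nonneg _
  set c : ℝ := (‖star j * j‖ + 1)⁻¹ with hc
  let j' : Unitization ℂ A := (j : Unitization ℂ A)
  let b' : Unitization ℂ A := ((star j * j : A) : Unitization ℂ A)
  have hbb' : b' = star j' * j' := by
    show ((star j * j : A) : Unitization ℂ A) = star (j : Unitization ℂ A) * (j : Unitization ℂ A)
    rw [Unitization.inr_mul, Unitization.inr_star]
  have hb'sa : IsSelfAdjoint b' := hbb' ▸ IsSelfAdjoint.star_mul_self j'
  have hb'nn : (0:Unitization ℂ A) ≤ b' := by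
    rw [Unitization.inr_nonneg_iff]
    exact star_mul_self_nonneg j
  let w : Unitization ℂ A := 1 - (c : ℂ) • b'
  have hwsa : IsSelfAdjoint w :=
    (IsSelfAdjoint.one _).sub <|
      IsSelfAdjoint.smul (by simp [isSelfAdjoint_iff] : IsSelfAdjoint ((c:ℝ):ℂ)) hb'sa
  have hcomm : Commute b' w :=
    (Commute.one_right b').sub_right ((Commute.refl b').smul_right _)
  -- norm identity
  have h1 : ‖j * seqU (star j * j) c n - j‖ = ‖j' * w ^ n‖ := by
    rw [← Unitization.norm_inr (𝕜 := ℂ) (j * seqU (star j * j) c n - j),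
      inr_mul_seqU_sub j c n, norm_neg]
  have h2 : ‖j' * w ^ n‖ ^ 2 = ‖b' * w ^ (2 * n)‖ := by
    rw [sq, ← CStarRing.norm_star_mul_self, star_mul, (hwsa.pow n).star_eq,
      mul_assoc, ← mul_assoc (star j'), ← hbb', ← mul_assoc,
      ← (hcomm.pow_right n).eq, mul_assoc, ← pow_add, two_mul]
  have h3 : cfc (fun t : ℝ => t * (1 - c * t) ^ (2 * n)) b' = b' * w ^ (2 * n) := by
    have hpoly := cfc_polynomial (X * (1 - C c * X) ^ (2 * n) : ℝ[X]) b' hb'sa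
    simp only [eval_mul, eval_pow, eval_sub, eval_one, eval_C, eval_X, map_mul, map_pow,
      map_sub, map_one, aeval_X, aeval_C] at hpoly
    rw [hpoly]
    have : algebraMap ℝ (Unitization ℂ A) c * b' = (c : ℂ) • b' := by
      rw [← Algebra.smul_def, ← Complex.coe_algebraMap, algebraMap_smul]
    rw [this]
  have h4 : ‖cfc (fun t : ℝ => t * (1 - c * t) ^ (2 * n)) b'‖ ≤ (‖star j * j‖ + 1) / (2 * n) := by
    apply norm_cfc_le (by positivity)
    intro x hx
    have hx0 : 0 ≤ x := spectrum_nonneg_of_nonneg hb'nn hx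
    have hxle : x ≤ ‖star j * j‖ := by
      have := spectrum.norm_le_norm_of_mem hx
      rw [Real.norm_eq_abs] at this
      calc x ≤ |x| := le_abs_self x
        _ ≤ ‖b'‖ := this
        _ = ‖star j * j‖ := Unitization.norm_inr _
    rw [Real.norm_eq_abs]
    exact real_bound hM hx0 hxle n hn
  rw [h1, h2, ← h3]
  exact h4


lemma tendsto_mul_seqU (j : A) :
    Filter.Tendsto (fun n => j * seqU (star j * j) (‖star j * j‖ + 1)⁻¹ n)
      Filter.atTop (𝓝 j) := by
  rw [tendsto_iff_norm_sub_tendsto_zero]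
  have hM : (0:ℝ) ≤ ‖star j * j‖ := norm_nonneg _
  have htends : Filter.Tendsto (fun n : ℕ => Real.sqrt ((‖star j * j‖ + 1) / (2 * n)))
      Filter.atTop (𝓝 0) := by
    have h0 : Filter.Tendsto (fun n : ℕ => (‖star j * j‖ + 1) / (2 * (n:ℝ)))
        Filter.atTop (𝓝 0) :=
by
      apply Filter.Tendsto.const_div_atTop
      exact Filter.Tendsto.const_mul_atTop (by norm_num : (0:ℝ) < 2)
        (tendsto_natCast_atTop_atTop (R := ℝ))
    have := (Real.continuous_sqrt.tendsto 0).comp h0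
    simpa only [Function.comp_def, Real.sqrt_zero] using this
  apply squeeze_zero' (Filter.Eventually.of_forall fun n => norm_nonneg _) _ htends
  filter_upwards [Filter.eventually_ge_atTop 1] with n hn
  exact (Real.le_sqrt (norm_nonneg _) (by positivity)).mpr (seqU_norm_sq_le j hn)

end Aux

/-- If `J` is a closed left ideal of the C*-algebra `B = closure span ⟪E,E⟫`, then
`J = J(E(J))`. -/
theorem J_eq_JM_EJ (J : Submodule ℂ A) (hJB : (J : Set A) ⊆ BS A E)
    (hJclosed : IsClosed (J : Set A))
    (hJleft : ∀ b ∈ BS A E, ∀ j ∈ J, b * j ∈ J) :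
    JM A E ((EJ A E (J : Set A) : Submodule ℂ E) : Set E) = J := by
  have hBSgen : ∀ η ξ : E, ⟪η, ξ⟫_A ∈ BS A E := fun η ξ =>
    subset_closure (Submodule.subset_span ⟨η, ξ, rfl⟩)
  have hstarBS : ∀ b ∈ BS A E, star b ∈ BS A E := by
    intro b hb
    set S : Submodule ℂ A := Submodule.span ℂ {a : A | ∃ η ξ : E, a = ⟪η, ξ⟫_A} with hS
    have hSstar : ∀ x ∈ S, star x ∈ S := by
      intro x hx
      induction hx using Submodule.span_induction with
      | mem x hx => obtain ⟨η, ξ, rfl⟩ := hx; exact Submodule.subset_span ⟨ξ, η, by simp [RightCStarModule.star_inner]⟩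
      | zero => simpa using S.zero_mem
      | add x y _ _ hx hy => rw [star_add]; exact S.add_mem hx hy
      | smul c x _ hx => rw [star_smul]; exact S.smul_mem _ hx
    have : star b ∈ star '' closure (S : Set A) := ⟨b, hb, rfl⟩
    have h2 := (image_closure_subset_closure_image (f := (star : A → A)) continuous_star) this
    refine closure_mono ?_ h2
    rintro _ ⟨x, hx, rfl⟩
    exact hSstar x hx
  apply le_antisymm
  · -- `JM (EJ J) ≤ J`
    apply Submodule.topologicalClosure_minimal _ _ hJclosed
    rw [Submodule.span_le]
    rintro _ ⟨η, m, hm, rfl⟩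
    let f : E →ₗ[ℂ] A :=
      { toFun := fun y => ⟪η, y⟫_A
        map_add' := fun x y => RightCStarModule.inner_add_right
        map_smul' := fun c x => RightCStarModule.inner_smul_right_complex }
    have hfc : Continuous f := by
      have : Continuous fun y : E => ⟪η, y⟫_A :=
          AddMonoidHomClass.continuous_of_bound f ‖η‖ (fun y => norm_inner_le_right η y)
      exact this
    have hle : EJ A E (J : Set A) ≤ Submodule.comap f J := by
      apply Submodule.topologicalClosure_minimal
      · rw [Submodule.span_le]
        rintro _ ⟨ξ, a, ha, rfl⟩
        simp only [SetLike.mem_coe, Submodule.mem_comap]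
        show ⟪η, ξ <• a⟫_A ∈ J
        rw [RightCStarModule.inner_op_smul_right]
        exact hJleft _ (hBSgen η ξ) a ha
      · exact hJclosed.preimage hfc
    exact hle hm
  · -- `J ≤ JM (EJ J)`
    intro j hj
    set K := JM A E ((EJ A E (J : Set A) : Submodule ℂ E) : Set E) with hK
    have hKclosed : IsClosed (K : Set A) := Submodule.isClosed_topologicalClosure _
    have hmulstep : ∀ b ∈ BS A E, ∀ i ∈ J, b * i ∈ K := by
      intro b hb i hi
      let g : A →ₗ[ℂ] A :=
        { toFun := fun x => x * i
          map_add' := fun x y => add_mul x y i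
          map_smul' := fun c x => smul_mul_assoc c x i }
      have hgc : Continuous g := by
        have : Continuous fun x : A => x * i := by fun_prop
        exact this
      have hle : (Submodule.span ℂ {a : A | ∃ η ξ : E, a = ⟪η, ξ⟫_A}).topologicalClosure ≤
          Submodule.comap g K := by
        apply Submodule.topologicalClosure_minimal
        · rw [Submodule.span_le]
          rintro _ ⟨η, ξ, rfl⟩
          simp only [SetLike.mem_coe, Submodule.mem_comap]
          show ⟪η, ξ⟫_A * i ∈ K
          rw [← RightCStarModule.inner_op_smul_right]
          have hmEJ : ξ <• i ∈ EJ A E (J : Set A) :=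
            Submodule.le_topologicalClosure _ (Submodule.subset_span ⟨ξ, i, hi, rfl⟩)
          exact Submodule.le_topologicalClosure _
            (Submodule.subset_span ⟨η, ξ <• i, hmEJ, rfl⟩)
        · exact hKclosed.preimage hgc
      exact hle hb
    have hbJ : star j * j ∈ J := hJleft (star j) (hstarBS j (hJB hj)) j hj
    have hseq : ∀ n, seqU (star j * j) (‖star j * j‖ + 1)⁻¹ n ∈ J := by
      intro n
      induction n with
      | zero => exact J.zero_mem
      | succ n ih =>
        rw [seqU]
        refine J.sub_mem (J.add_mem (J.smul_mem _ hbJ) ih) ?_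
        exact hJleft _ (hJB (J.smul_mem _ hbJ)) _ ih
    have hmem : ∀ n, j * seqU (star j * j) (‖star j * j‖ + 1)⁻¹ n ∈ K := fun n =>
      hmulstep j (hJB hj) _ (hseq n)
    exact hKclosed.mem_of_tendsto (tendsto_mul_seqU j) (Filter.Eventually.of_forall hmem)
end

section
/- Let E be a Hilbert C*-module over a C*-algebra A. A closed subspace M ⊆ E is invariant under the algebra K(E) generated by the rank-one operators θ_{η,ξ} if and only if it is invariant under all adjointable operators L(E), if and only if it is invariant under all bounded A-module operators End_A(E). That is, Lat K(E) = Lat L(E) = Lat End_A(E). -/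
open scoped InnerProductSpace RightActions
open Filter Topology

section RightCStarModuleAux

variable {A E : Type*} [NonUnitalCStarAlgebra A] [PartialOrder A] [StarOrderedRing A]
  [NormedAddCommGroup E] [NormedSpace ℂ E] [SMul Aᵐᵒᵖ E] [RightCStarModule A E]

lemma RightCStarModule.inner_sub_right_s8 {x y z : E} : ⟪x, y - z⟫_A = ⟪x, y⟫_A - ⟪x, z⟫_A := by
  have h := RightCStarModule.inner_add_right (A := A) (x := x) (y := y - z) (z := z)
  rw [sub_add_cancel] at h
  exact eq_sub_of_add_eq h.symm

lemma RightCStarModule.inner_add_left {x y z : E} : ⟪x + y, z⟫_A = ⟪x, z⟫_A + ⟪y, z⟫_A := by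
  rw [← RightCStarModule.star_inner z (x + y), RightCStarModule.inner_add_right, star_add,
    RightCStarModule.star_inner, RightCStarModule.star_inner]

lemma RightCStarModule.inner_sub_left_s8 {x y z : E} : ⟪x - y, z⟫_A = ⟪x, z⟫_A - ⟪y, z⟫_A := by
  rw [← RightCStarModule.star_inner z (x - y), RightCStarModule.inner_sub_right_s8, star_sub,
    RightCStarModule.star_inner, RightCStarModule.star_inner]

@[simp] lemma RightCStarModule.inner_zero_right {x : E} : ⟪x, 0⟫_A = 0 := by
  have h := RightCStarModule.inner_sub_right_s8 (A := A) (x := x) (y := 0) (z := 0)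
  rwa [sub_self, sub_self] at h

@[simp] lemma RightCStarModule.inner_zero_left {x : E} : ⟪0, x⟫_A = 0 := by
  rw [← RightCStarModule.star_inner, RightCStarModule.inner_zero_right, star_zero]

lemma RightCStarModule.inner_op_smul_left_s8 {a : A} {x y : E} :
    ⟪x <• a, y⟫_A = star a * ⟪x, y⟫_A := by
  rw [← RightCStarModule.star_inner y, RightCStarModule.inner_op_smul_right, star_mul,
    RightCStarModule.star_inner]

lemma RightCStarModule.inner_smul_left_complex {z : ℂ} {x y : E} :
    ⟪z • x, y⟫_A = star z • ⟪x, y⟫_A := by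
  rw [← RightCStarModule.star_inner y, RightCStarModule.inner_smul_right_complex, star_smul,
    RightCStarModule.star_inner]

lemma RightCStarModule.inner_smul_right_real {z : ℝ} {x y : E} :
    ⟪x, z • y⟫_A = z • ⟪x, y⟫_A := by
  have h₁ : z • y = (z : ℂ) • y := by simp
  rw [h₁, RightCStarModule.inner_smul_right_complex]
  simp

lemma RightCStarModule.inner_smul_left_real {z : ℝ} {x y : E} :
    ⟪z • x, y⟫_A = z • ⟪x, y⟫_A := by
  have h₁ : z • x = (z : ℂ) • x := by simp
  rw [h₁, RightCStarModule.inner_smul_left_complex]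
  simp

variable (A) in
lemma RightCStarModule.norm_sq_eq_s8 {x : E} : ‖x‖ ^ 2 = ‖⟪x, x⟫_A‖ := by
  rw [RightCStarModule.norm_eq_sqrt_norm_inner_self (A := A) x, Real.sq_sqrt (norm_nonneg _)]

lemma RightCStarModule.inner_mul_inner_swap_le {x y : E} :
    ⟪y, x⟫_A * ⟪x, y⟫_A ≤ ‖x‖ ^ 2 • ⟪y, y⟫_A := by
  rcases eq_or_ne x 0 with h | h
  · subst h; simp
  · have hx : 0 < ‖x‖ := norm_pos_iff.mpr h
    have h₁ : ∀ a : A, (0 : A) ≤ ‖x‖ ^ 2 • (star a * a) - ‖x‖ ^ 2 • (star a * ⟪x, y⟫_A)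
        - ‖x‖ ^ 2 • (⟪y, x⟫_A * a) + ‖x‖ ^ 2 • (‖x‖ ^ 2 • ⟪y, y⟫_A) := fun a => by
      calc (0 : A) ≤ ⟪x <• a - ‖x‖ ^ 2 • y, x <• a - ‖x‖ ^ 2 • y⟫_A :=
            RightCStarModule.inner_self_nonneg
        _ = star a * ⟪x, x⟫_A * a - ‖x‖ ^ 2 • (star a * ⟪x, y⟫_A)
            - ‖x‖ ^ 2 • (⟪y, x⟫_A * a) + ‖x‖ ^ 2 • (‖x‖ ^ 2 • ⟪y, y⟫_A) := by
          simp only [RightCStarModule.inner_sub_right_s8, RightCStarModule.inner_op_smul_right,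
            RightCStarModule.inner_sub_left_s8, RightCStarModule.inner_op_smul_left_s8,
            RightCStarModule.inner_smul_left_real, RightCStarModule.inner_smul_right_real,
            mul_smul_comm, smul_sub, mul_assoc, sub_mul, smul_mul_assoc]
          abel
        _ ≤ ‖x‖ ^ 2 • (star a * a) - ‖x‖ ^ 2 • (star a * ⟪x, y⟫_A)
            - ‖x‖ ^ 2 • (⟪y, x⟫_A * a) + ‖x‖ ^ 2 • (‖x‖ ^ 2 • ⟪y, y⟫_A) := by
          gcongr
          calc star a * ⟪x, x⟫_A * a ≤ ‖⟪x, x⟫_A‖ • (star a * a) :=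
                CStarAlgebra.star_left_conjugate_le_norm_smul
                  (hb := RightCStarModule.star_inner x x)
            _ = ‖x‖ ^ 2 • (star a * a) := by rw [RightCStarModule.norm_sq_eq_s8 A]
    specialize h₁ ⟪x, y⟫_A
    simp only [RightCStarModule.star_inner, sub_self, zero_sub, le_neg_add_iff_add_le,
      add_zero] at h₁
    rwa [smul_le_smul_iff_of_pos_left (pow_pos hx _)] at h₁

variable (E) in
lemma RightCStarModule.norm_inner_le {x y : E} : ‖⟪x, y⟫_A‖ ≤ ‖x‖ * ‖y‖ := by
  have := calc ‖⟪x, y⟫_A‖ ^ 2 = ‖⟪y, x⟫_A * ⟪x, y⟫_A‖ := by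
                rw [← RightCStarModule.star_inner x y, CStarRing.norm_star_mul_self, pow_two]
    _ ≤ ‖‖x‖ ^ 2 • ⟪y, y⟫_A‖ :=
                CStarAlgebra.norm_le_norm_of_nonneg_of_le
                  (by rw [← RightCStarModule.star_inner x y]; exact star_mul_self_nonneg _)
                  RightCStarModule.inner_mul_inner_swap_le
    _ = ‖x‖ ^ 2 * ‖⟪y, y⟫_A‖ := by simp [norm_smul]
    _ = ‖x‖ ^ 2 * ‖y‖ ^ 2 := by rw [RightCStarModule.norm_sq_eq_s8 A (x := y)]
    _ = (‖x‖ * ‖y‖) ^ 2 := by ring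
  exact (pow_le_pow_iff_left₀ (norm_nonneg _) (by positivity) (by norm_num)).mp this

end RightCStarModuleAux

set_option linter.unusedSectionVars false

namespace LatAux

/-! ### Elementary real inequality (Bernoulli-type bound) -/

lemma latBernoulli {K : ℝ} (hK : 0 < K) (n : ℕ) (t : ℝ) (ht0 : 0 ≤ t) (htK : t ≤ K) :
    t * ((1 - t / K) ^ (n + 1)) ^ 2 ≤ K / (2 * ((n : ℝ) + 1)) := by
  set m : ℕ := 2 * (n + 1) with hm
  set s : ℝ := t / K with hs
  have hs0 : 0 ≤ s := by positivity
  have hs1 : s ≤ 1 := div_le_one_of_le₀ htK hK.le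
  have h1s : 0 ≤ 1 - s := by linarith
  have hpownn : 0 ≤ (1 - s) ^ m := pow_nonneg h1s m
  have hpow : ((1 - s) ^ (n + 1)) ^ 2 = (1 - s) ^ m := by
    rw [← pow_mul, hm, mul_comm]
  have hbern : 1 + (m : ℝ) * s ≤ (1 + s) ^ m := one_add_mul_le_pow (by linarith) m
  have key : (m : ℝ) * (s * (1 - s) ^ m) ≤ 1 := by
    calc (m : ℝ) * (s * (1 - s) ^ m) = ((m : ℝ) * s) * (1 - s) ^ m := by ring
      _ ≤ (1 + (m : ℝ) * s) * (1 - s) ^ m := by nlinarith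
      _ ≤ (1 + s) ^ m * (1 - s) ^ m := by nlinarith
      _ = ((1 + s) * (1 - s)) ^ m := (mul_pow _ _ m).symm
      _ = (1 - s * s) ^ m := by ring_nf
      _ ≤ 1 := pow_le_one₀ (by nlinarith) (by nlinarith)
  have ht : t = K * s := by rw [hs, mul_div_cancel₀ t hK.ne']
  have hmpos : (0 : ℝ) < (m : ℝ) := by positivity
  have hcore : s * (1 - s) ^ m ≤ 1 / (m : ℝ) := by
    rw [le_div_iff₀ hmpos]; linarith [key]
  have hmeq : ((m : ℕ) : ℝ) = 2 * ((n : ℝ) + 1) := by push_cast [hm]; ring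
  calc t * ((1 - s) ^ (n + 1)) ^ 2 = K * (s * (1 - s) ^ m) := by rw [ht, hpow]; ring
    _ ≤ K * (1 / (m : ℝ)) := mul_le_mul_of_nonneg_left hcore hK.le
    _ = K / (2 * ((n : ℝ) + 1)) := by rw [hmeq]; ring

/-! ### A C*-algebraic approximate-unit-type sequence built from `cfcₙ` -/

section CStar

variable {A : Type*} [NonUnitalCStarAlgebra A] [PartialOrder A] [StarOrderedRing A]

open scoped NNReal in
lemma latSpecBound (b : A) (hb0 : 0 ≤ b) :
    ∀ t ∈ quasispectrum ℝ b, 0 ≤ t ∧ t ≤ ‖b‖ := by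
  intro t ht
  have h0 : 0 ≤ t := quasispectrum_nonneg_of_nonneg b hb0 t ht
  refine ⟨h0, ?_⟩
  have ht' : (⟨t, h0⟩ : ℝ≥0) ∈ quasispectrum ℝ≥0 b := by
    rw [← quasispectrum.preimage_algebraMap ℝ]
    exact ht
  exact_mod_cast CStarAlgebra.le_nnnorm_of_mem_quasispectrum ht'

lemma latCStarSeq (b : A) (hb0 : 0 ≤ b) :
    ∃ c : ℕ → A, c 0 = 0 ∧ (∀ n, IsSelfAdjoint (c n)) ∧
      (∀ n, c n * b = b * c n) ∧
      (∀ n, ∃ r : ℝ, c (n + 1) = c n + r • (b - b * c n)) ∧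
      (∀ n, ‖b - b * c (n + 1) - c (n + 1) * b + c (n + 1) * (b * c (n + 1))‖
        ≤ (‖b‖ + 1) / (2 * ((n : ℝ) + 1))) := by
  have hbsa : IsSelfAdjoint b := .of_nonneg hb0
  set K : ℝ := ‖b‖ + 1 with hKdef
  have hKpos : (0 : ℝ) < K := by positivity
  have hf0 : ∀ n : ℕ, (fun t : ℝ => 1 - (1 - t / K) ^ n) 0 = 0 := fun n => by simp
  have hfc : ∀ n : ℕ, ContinuousOn (fun t : ℝ => 1 - (1 - t / K) ^ n) (quasispectrum ℝ b) :=
    fun n => Continuous.continuousOn (by fun_prop)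
  refine ⟨fun n => cfcₙ (fun t : ℝ => 1 - (1 - t / K) ^ n) b, ?_, ?_, ?_, ?_, ?_⟩
  · show cfcₙ (fun t : ℝ => 1 - (1 - t / K) ^ 0) b = 0
    have h : (fun t : ℝ => 1 - (1 - t / K) ^ 0) = fun _ : ℝ => 0 := by
      funext t; simp
    rw [h, cfcₙ_const_zero]
  · exact fun n => cfcₙ_predicate _ b
  · intro n
    have h := cfcₙ_commute_cfcₙ (fun t : ℝ => 1 - (1 - t / K) ^ n) (fun t : ℝ => t) b
    rw [cfcₙ_id' ℝ b hbsa] at h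
    exact h.eq
  · intro n
    refine ⟨K⁻¹, ?_⟩
    have e_id : cfcₙ (fun t : ℝ => t) b = b := cfcₙ_id' ℝ b hbsa
    have hmul : b * cfcₙ (fun t : ℝ => 1 - (1 - t / K) ^ n) b
        = cfcₙ (fun t : ℝ => t * (1 - (1 - t / K) ^ n)) b := by
      have h := cfcₙ_mul (fun t : ℝ => t) (fun t : ℝ => 1 - (1 - t / K) ^ n) b
        continuousOn_id rfl (hfc n) (hf0 n)
      rw [e_id] at h
      exact h.symm
    rw [hmul]
    have h1 : cfcₙ (fun t : ℝ => t - t * (1 - (1 - t / K) ^ n)) b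
        = b - cfcₙ (fun t : ℝ => t * (1 - (1 - t / K) ^ n)) b := by
      have h := cfcₙ_sub (fun t : ℝ => t) (fun t : ℝ => t * (1 - (1 - t / K) ^ n)) b
        continuousOn_id rfl (Continuous.continuousOn (by fun_prop)) (by simp)
      rw [e_id] at h
      exact h
    have h2 : cfcₙ (fun t : ℝ => K⁻¹ * (t - t * (1 - (1 - t / K) ^ n))) b
        = K⁻¹ • (b - cfcₙ (fun t : ℝ => t * (1 - (1 - t / K) ^ n)) b) := by
      have h := cfcₙ_const_mul K⁻¹ (fun t : ℝ => t - t * (1 - (1 - t / K) ^ n)) b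
        (Continuous.continuousOn (by fun_prop)) (by simp)
      rw [h1] at h
      exact h
    have h3 := cfcₙ_add (fun t : ℝ => 1 - (1 - t / K) ^ n)
      (fun t : ℝ => K⁻¹ * (t - t * (1 - (1 - t / K) ^ n))) b
      (hfc n) (hf0 n) (Continuous.continuousOn (by fun_prop)) (by simp)
    rw [h2] at h3
    rw [← h3]
    apply cfcₙ_congr
    intro t _
    show 1 - (1 - t / K) ^ (n + 1)
      = 1 - (1 - t / K) ^ n + K⁻¹ * (t - t * (1 - (1 - t / K) ^ n))
    have hKne : K ≠ 0 := hKpos.ne'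
    rw [pow_succ]
    field_simp
    ring
  · intro n
    set f : ℝ → ℝ := fun t : ℝ => 1 - (1 - t / K) ^ (n + 1) with hf
    have e_id : cfcₙ (fun t : ℝ => t) b = b := cfcₙ_id' ℝ b hbsa
    have hfc' : ContinuousOn f (quasispectrum ℝ b) := hfc (n + 1)
    have hf0' : f 0 = 0 := hf0 (n + 1)
    have hmul : b * cfcₙ f b = cfcₙ (fun t : ℝ => t * f t) b := by
      have h := cfcₙ_mul (fun t : ℝ => t) f b continuousOn_id rfl hfc' hf0'
      rw [e_id] at h
      exact h.symm
    have hcomm : cfcₙ f b * b = b * cfcₙ f b := by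
      have h := cfcₙ_commute_cfcₙ f (fun t : ℝ => t) b
      rw [cfcₙ_id' ℝ b hbsa] at h
      exact h.eq
    have hmul2 : cfcₙ f b * (b * cfcₙ f b) = cfcₙ (fun t : ℝ => f t * (t * f t)) b := by
      rw [hmul]
      have h := cfcₙ_mul f (fun t : ℝ => t * f t) b hfc' hf0'
        (Continuous.continuousOn (by rw [hf]; fun_prop)) (by simp [hf0'])
      exact h.symm
    have hsub1 : b - cfcₙ (fun t : ℝ => t * f t) b
        = cfcₙ (fun t : ℝ => t - t * f t) b := by
      have h := cfcₙ_sub (fun t : ℝ => t) (fun t : ℝ => t * f t) b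
        continuousOn_id rfl (Continuous.continuousOn (by rw [hf]; fun_prop)) (by simp [hf0'])
      rw [e_id] at h
      exact h.symm
    have hsub2 : cfcₙ (fun t : ℝ => t - t * f t) b - cfcₙ (fun t : ℝ => t * f t) b
        = cfcₙ (fun t : ℝ => (t - t * f t) - t * f t) b := by
      have h := cfcₙ_sub (fun t : ℝ => t - t * f t) (fun t : ℝ => t * f t) b
        (Continuous.continuousOn (by rw [hf]; fun_prop)) (by simp [hf0'])
        (Continuous.continuousOn (by rw [hf]; fun_prop)) (by simp [hf0'])
      exact h.symm
    have hadd : cfcₙ (fun t : ℝ => (t - t * f t) - t * f t) b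
          + cfcₙ (fun t : ℝ => f t * (t * f t)) b
        = cfcₙ (fun t : ℝ => ((t - t * f t) - t * f t) + f t * (t * f t)) b := by
      have h := cfcₙ_add (fun t : ℝ => (t - t * f t) - t * f t)
        (fun t : ℝ => f t * (t * f t)) b
        (Continuous.continuousOn (by rw [hf]; fun_prop)) (by simp [hf0'])
        (Continuous.continuousOn (by rw [hf]; fun_prop)) (by simp [hf0'])
      exact h.symm
    have hexpr : b - b * cfcₙ f b - cfcₙ f b * b + cfcₙ f b * (b * cfcₙ f b)
        = cfcₙ (fun t : ℝ => t * ((1 - t / K) ^ (n + 1)) ^ 2) b := by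
      rw [hcomm, hmul2, hmul, hsub1, hsub2, hadd]
      apply cfcₙ_congr
      intro t _
      show t - t * f t - t * f t + f t * (t * f t) = t * ((1 - t / K) ^ (n + 1)) ^ 2
      rw [hf]
      ring
    rw [hexpr]
    apply norm_cfcₙ_le
    intro t ht
    obtain ⟨ht0, htb⟩ := latSpecBound b hb0 t ht
    have htK : t ≤ K := by rw [hKdef]; linarith
    rw [Real.norm_eq_abs, abs_of_nonneg (by positivity)]
    exact latBernoulli hKpos n t ht0 htK

end CStar

/-! ### Hilbert C*-module helper lemmas -/

variable {A E : Type*} [NonUnitalCStarAlgebra A] [PartialOrder A] [StarOrderedRing A]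
  [NormedAddCommGroup E] [NormedSpace ℂ E] [SMul Aᵐᵒᵖ E] [RightCStarModule A E]

lemma ext_inner {z w : E} (h : ∀ x : E, ⟪x, z⟫_A = ⟪x, w⟫_A) : z = w := by
  have h2 : ⟪z - w, z - w⟫_A = 0 := by
    rw [RightCStarModule.inner_sub_right_s8, h (z - w), sub_self]
  exact sub_eq_zero.mp (RightCStarModule.inner_self.mp h2)

lemma op_smul_add (x : E) (a b : A) : x <• (a + b) = x <• a + x <• b := by
  apply ext_inner (A := A); intro y
  rw [RightCStarModule.inner_op_smul_right, RightCStarModule.inner_add_right,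
    RightCStarModule.inner_op_smul_right, RightCStarModule.inner_op_smul_right, mul_add]

lemma op_smul_sub (x : E) (a b : A) : x <• (a - b) = x <• a - x <• b := by
  apply ext_inner (A := A); intro y
  rw [RightCStarModule.inner_op_smul_right, RightCStarModule.inner_sub_right_s8,
    RightCStarModule.inner_op_smul_right, RightCStarModule.inner_op_smul_right, mul_sub]

lemma op_smul_zero (x : E) : x <• (0 : A) = 0 := by
  apply ext_inner (A := A); intro y
  rw [RightCStarModule.inner_op_smul_right, mul_zero, RightCStarModule.inner_zero_right]

lemma op_smul_complex (c : ℂ) (x : E) (a : A) : x <• (c • a) = c • (x <• a) := by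
  apply ext_inner (A := A); intro y
  rw [RightCStarModule.inner_op_smul_right, RightCStarModule.inner_smul_right_complex,
    RightCStarModule.inner_op_smul_right, mul_smul_comm]

lemma op_smul_real (r : ℝ) (x : E) (a : A) : x <• (r • a) = r • (x <• a) := by
  apply ext_inner (A := A); intro y
  rw [RightCStarModule.inner_op_smul_right, RightCStarModule.inner_smul_right_real,
    RightCStarModule.inner_op_smul_right, mul_smul_comm]

lemma norm_op_smul_le (x : E) (a : A) : ‖x <• a‖ ≤ ‖x‖ * ‖a‖ := by
  have h1 : ‖x <• a‖ ^ 2 = ‖star a * ⟪x, x⟫_A * a‖ := by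
    rw [RightCStarModule.norm_sq_eq_s8 A]
    congr 1
    rw [RightCStarModule.inner_op_smul_left_s8, RightCStarModule.inner_op_smul_right, mul_assoc]
  have h3 : ‖x <• a‖ ^ 2 ≤ (‖x‖ * ‖a‖) ^ 2 := by
    rw [h1]
    calc ‖star a * ⟪x, x⟫_A * a‖ ≤ ‖star a * ⟪x, x⟫_A‖ * ‖a‖ := norm_mul_le _ _
      _ ≤ ‖star a‖ * ‖⟪x, x⟫_A‖ * ‖a‖ := by gcongr; exact norm_mul_le _ _
      _ ≤ ‖a‖ * (‖x‖ * ‖x‖) * ‖a‖ := by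
          rw [norm_star]
          gcongr
          simpa using RightCStarModule.norm_inner_le (x := x) (y := x) E
      _ = (‖x‖ * ‖a‖) ^ 2 := by ring
  exact (pow_le_pow_iff_left₀ (norm_nonneg _) (by positivity) (by norm_num)).mp h3

/-- The rank-one operator `θ_{η,ξ}`. -/
noncomputable def theta (η ξ : E) : E →L[ℂ] E :=
  LinearMap.mkContinuous
    { toFun := fun v => η <• ⟪ξ, v⟫_A
      map_add' := fun v w => by
        show η <• ⟪ξ, v + w⟫_A = _
        rw [RightCStarModule.inner_add_right, op_smul_add]
      map_smul' := fun c v => by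
        show η <• ⟪ξ, c • v⟫_A = c • (η <• ⟪ξ, v⟫_A)
        rw [RightCStarModule.inner_smul_right_complex, op_smul_complex] }
    (‖η‖ * ‖ξ‖)
    (fun v => by
      calc ‖η <• ⟪ξ, v⟫_A‖ ≤ ‖η‖ * ‖⟪ξ, v⟫_A‖ := norm_op_smul_le _ _
        _ ≤ ‖η‖ * (‖ξ‖ * ‖v‖) := by gcongr; exact RightCStarModule.norm_inner_le E
        _ = ‖η‖ * ‖ξ‖ * ‖v‖ := by ring)

@[simp] lemma theta_apply (η ξ v : E) : theta (A := A) η ξ v = η <• ⟪ξ, v⟫_A := rfl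

lemma theta_mem_KE (η ξ : E) : theta (A := A) η ξ ∈ KE A E :=
  NonUnitalSubalgebra.le_topologicalClosure _
    (NonUnitalAlgebra.subset_adjoin ℂ ⟨η, ξ, fun v => theta_apply η ξ v⟩)

lemma flip_inner {T Sa : E →L[ℂ] E} (h : ∀ x y : E, ⟪T x, y⟫_A = ⟪x, Sa y⟫_A)
    (x y : E) : ⟪x, T y⟫_A = ⟪Sa x, y⟫_A := by
  rw [← RightCStarModule.star_inner (T y), h, RightCStarModule.star_inner]

lemma adjointable_of_mem_adjoin {T : E →L[ℂ] E}
    (hT : T ∈ NonUnitalAlgebra.adjoin ℂ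
      {T : E →L[ℂ] E | ∃ η ξ : E, ∀ x : E, T x = η <• ⟪ξ, x⟫_A}) :
    Adjointable A E T := by
  induction hT using NonUnitalAlgebra.adjoin_induction with
  | mem T hT =>
      obtain ⟨η, ξ, hθ⟩ := hT
      refine ⟨theta (A := A) ξ η, fun x y => ?_⟩
      rw [hθ x, theta_apply, RightCStarModule.inner_op_smul_left_s8, RightCStarModule.inner_op_smul_right,
        RightCStarModule.star_inner]
  | add T₁ T₂ h₁ h₂ ih₁ ih₂ =>
      obtain ⟨S₁, hS₁⟩ := ih₁; obtain ⟨S₂, hS₂⟩ := ih₂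
      exact ⟨S₁ + S₂, fun x y => by
        simp only [ContinuousLinearMap.add_apply, RightCStarModule.inner_add_left,
          RightCStarModule.inner_add_right, hS₁, hS₂]⟩
  | zero => exact ⟨0, fun x y => by simp⟩
  | mul T₁ T₂ h₁ h₂ ih₁ ih₂ =>
      obtain ⟨S₁, hS₁⟩ := ih₁; obtain ⟨S₂, hS₂⟩ := ih₂
      exact ⟨S₂.comp S₁, fun x y => by
        simp only [ContinuousLinearMap.mul_apply, ContinuousLinearMap.comp_apply, hS₁, hS₂]⟩
  | smul c T₁ h₁ ih₁ =>
      obtain ⟨S₁, hS₁⟩ := ih₁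
      exact ⟨(starRingEnd ℂ c) • S₁, fun x y => by
        simp only [ContinuousLinearMap.smul_apply, RightCStarModule.inner_smul_left_complex,
          RightCStarModule.inner_smul_right_complex, hS₁, starRingEnd_apply]⟩

/-! ### The three implications -/

lemma imp_L_K (M : Submodule ℂ E) (hMclosed : IsClosed (M : Set E))
    (hL : ∀ T : E →L[ℂ] E, Adjointable A E T → ∀ x ∈ M, T x ∈ M) :
    ∀ T : E →L[ℂ] E, T ∈ KE A E → ∀ x ∈ M, T x ∈ M := by
  intro T hT x hx
  have hT' : T ∈ closure (NonUnitalAlgebra.adjoin ℂ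
      {T : E →L[ℂ] E | ∃ η ξ : E, ∀ x : E, T x = η <• ⟪ξ, x⟫_A} : Set (E →L[ℂ] E)) := hT
  have hcont : Continuous fun S : E →L[ℂ] E => S x :=
    (ContinuousLinearMap.apply ℂ E x).continuous
  have hmem : T x ∈ closure ((fun S : E →L[ℂ] E => S x) '' (NonUnitalAlgebra.adjoin ℂ
      {T : E →L[ℂ] E | ∃ η ξ : E, ∀ x : E, T x = η <• ⟪ξ, x⟫_A} : Set (E →L[ℂ] E))) :=
    image_closure_subset_closure_image hcont ⟨T, hT', rfl⟩
  have hsub : ((fun S : E →L[ℂ] E => S x) '' (NonUnitalAlgebra.adjoin ℂ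
      {T : E →L[ℂ] E | ∃ η ξ : E, ∀ x : E, T x = η <• ⟪ξ, x⟫_A} : Set (E →L[ℂ] E)))
      ⊆ (M : Set E) := by
    rintro - ⟨S, hS, rfl⟩
    exact hL S (adjointable_of_mem_adjoin hS) x hx
  have h2 := closure_mono hsub hmem
  rwa [hMclosed.closure_eq] at h2

lemma imp_End_L (M : Submodule ℂ E)
    (hEnd : ∀ S : E →L[ℂ] E, (∀ (ξ : E) (a : A), S (ξ <• a) = S ξ <• a) →
      ∀ x ∈ M, S x ∈ M) :
    ∀ T : E →L[ℂ] E, Adjointable A E T → ∀ x ∈ M, T x ∈ M := by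
  intro T hT x hx
  obtain ⟨Sa, hSa⟩ := hT
  refine hEnd T (fun ξ a => ?_) x hx
  apply ext_inner (A := A)
  intro y
  rw [flip_inner hSa, RightCStarModule.inner_op_smul_right, RightCStarModule.inner_op_smul_right,
    ← flip_inner hSa]

lemma imp_K_End (M : Submodule ℂ E) (hMclosed : IsClosed (M : Set E))
    (hK : ∀ T : E →L[ℂ] E, T ∈ KE A E → ∀ x ∈ M, T x ∈ M) :
    ∀ S : E →L[ℂ] E, (∀ (ξ : E) (a : A), S (ξ <• a) = S ξ <• a) → ∀ x ∈ M, S x ∈ M := by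
  intro S hS x hx
  have hb0 : (0 : A) ≤ ⟪x, x⟫_A := RightCStarModule.inner_self_nonneg
  obtain ⟨c, hc0, hcsa, hcomm, hrec, hbound⟩ := latCStarSeq (⟪x, x⟫_A) hb0
  set b : A := ⟪x, x⟫_A with hbdef
  have stepA : ∀ ξ : E, S (x <• ⟪ξ, x⟫_A) ∈ M := fun ξ => by
    have h : S (x <• ⟪ξ, x⟫_A) = theta (A := A) (S x) ξ x := by rw [hS, theta_apply]
    rw [h]; exact hK _ (theta_mem_KE (S x) ξ) x hx
  have hresmul : ∀ (r : ℝ) (v : E), v ∈ M → r • v ∈ M := fun r v hv => by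
    have h : r • v = ((r : ℂ)) • v := by
      rw [← smul_one_smul ℂ r v, Complex.real_smul, mul_one]
    rw [h]; exact M.smul_mem _ hv
  have hmem : ∀ n, S (x <• c n) ∈ M := by
    intro n
    induction n with
    | zero => rw [hc0, op_smul_zero, map_zero]; exact M.zero_mem
    | succ n ih =>
        obtain ⟨r, hr⟩ := hrec n
        rw [hr, op_smul_add, op_smul_real, op_smul_sub, map_add]
        have hsm : S (r • (x <• b - x <• (b * c n)))
            = r • S (x <• b - x <• (b * c n)) := by
          rw [← smul_one_smul ℂ r (x <• b - x <• (b * c n)),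
            ← smul_one_smul ℂ r (S (x <• b - x <• (b * c n))), map_smul]
        rw [hsm, map_sub]
        have h1 : S (x <• b) ∈ M := stepA x
        have h2 : S (x <• (b * c n)) ∈ M := by
          have e : b * c n = ⟪x <• c n, x⟫_A := by
            rw [RightCStarModule.inner_op_smul_left_s8, (hcsa n).star_eq, ← hbdef, hcomm n]
          rw [e]; exact stepA (x <• c n)
        exact M.add_mem ih (hresmul r _ (M.sub_mem h1 h2))
  have hnorm : ∀ n : ℕ,
      ‖x - x <• c (n + 1)‖ ≤ Real.sqrt ((‖b‖ + 1) / (2 * ((n : ℝ) + 1))) := by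
    intro n
    have hexp : ⟪x - x <• c (n + 1), x - x <• c (n + 1)⟫_A
        = b - b * c (n + 1) - c (n + 1) * b + c (n + 1) * (b * c (n + 1)) := by
      rw [RightCStarModule.inner_sub_right_s8, RightCStarModule.inner_sub_left_s8, RightCStarModule.inner_sub_left_s8,
        RightCStarModule.inner_op_smul_right, RightCStarModule.inner_op_smul_left_s8,
        RightCStarModule.inner_op_smul_left_s8, RightCStarModule.inner_op_smul_right,
        (hcsa (n + 1)).star_eq, ← hbdef]
      noncomm_ring
    rw [RightCStarModule.norm_eq_sqrt_norm_inner_self (A := A), hexp]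
    exact Real.sqrt_le_sqrt (hbound n)
  have h2 : Tendsto (fun n : ℕ => 2 * ((n : ℝ) + 1)) atTop atTop := by
    apply Filter.Tendsto.const_mul_atTop (by norm_num : (0:ℝ) < 2)
    exact tendsto_atTop_add_const_right atTop 1 tendsto_natCast_atTop_atTop
  have h3 : Tendsto (fun n : ℕ => (‖b‖ + 1) / (2 * ((n : ℝ) + 1))) atTop (𝓝 0) :=
    h2.const_div_atTop _
  have h4 : Tendsto (fun n : ℕ => Real.sqrt ((‖b‖ + 1) / (2 * ((n : ℝ) + 1)))) atTop (𝓝 0) := by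
    have h := (Real.continuous_sqrt.tendsto 0).comp h3
    simpa [Function.comp_def, Real.sqrt_zero] using h
  have h5 : Tendsto (fun n : ℕ => x <• c (n + 1)) atTop (𝓝 x) := by
    rw [tendsto_iff_norm_sub_tendsto_zero]
    refine squeeze_zero (fun n => norm_nonneg _) (fun n => ?_) h4
    rw [norm_sub_rev]
    exact hnorm n
  have h6 : Tendsto (fun n : ℕ => S (x <• c (n + 1))) atTop (𝓝 (S x)) :=
    (S.continuous.tendsto x).comp h5
  exact hMclosed.mem_of_tendsto h6 (Eventually.of_forall fun n => hmem (n + 1))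

end LatAux

variable {A E : Type*} [NonUnitalCStarAlgebra A] [PartialOrder A] [StarOrderedRing A]
  [NormedAddCommGroup E] [NormedSpace ℂ E] [SMul Aᵐᵒᵖ E] [RightCStarModule A E]

/-- `Lat K(E) = Lat L(E) = Lat End_A(E)`: a closed subspace `M ⊆ E` is invariant under the
closed algebra `K(E)` generated by the rank-one operators iff it is invariant under every
adjointable operator, iff it is invariant under every bounded `A`-module operator. -/
theorem lat_KE_eq_lat_LE_eq_lat_End (M : Submodule ℂ E) (hMclosed : IsClosed (M : Set E)) :
    ((∀ T : E →L[ℂ] E, T ∈ KE A E → ∀ x ∈ M, T x ∈ M) ↔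
      (∀ T : E →L[ℂ] E, Adjointable A E T → ∀ x ∈ M, T x ∈ M)) ∧
    ((∀ T : E →L[ℂ] E, Adjointable A E T → ∀ x ∈ M, T x ∈ M) ↔
      (∀ S : E →L[ℂ] E, (∀ (ξ : E) (a : A), S (ξ <• a) = S ξ <• a) →
        ∀ x ∈ M, S x ∈ M)) := by
  constructor
  · constructor
    · intro hK
      exact LatAux.imp_End_L M (LatAux.imp_K_End M hMclosed hK)
    · exact LatAux.imp_L_K M hMclosed
  · constructor
    · intro hL
      exact LatAux.imp_K_End M hMclosed (LatAux.imp_L_K M hMclosed hL)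
    · exact LatAux.imp_End_L M
end

section
/- Let A be a C*-algebra and Φ : A → A a linear map that leaves every closed left ideal of A invariant (Φ(J) ⊆ J for each closed left ideal J). Then Φ(ba) = Φ(b)a for all a, b ∈ A. -/
open scoped InnerProductSpace RightActions
open Filter Topology

/-- The Hilbert C⋆-module class as it stood in the older Mathlib (right `A`-action via `Aᵐᵒᵖ`,
inner product `A`-linear on the right: `⟪x, y <• a⟫ = ⟪x, y⟫ * a`). -/
class CStarModuleOld (A E : Type*) [NonUnitalSemiring A] [StarRing A] [Module ℂ A]
    [AddCommGroup E] [Module ℂ E] [PartialOrder A] [SMul Aᵐᵒᵖ E] [Norm A] [Norm E]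
    extends Inner A E where
  inner_add_right {x} {y} {z} : inner x (y + z) = inner x y + inner x z
  inner_self_nonneg {x} : 0 ≤ inner x x
  inner_self {x} : inner x x = 0 ↔ x = 0
  inner_op_smul_right {a : A} {x y : E} : inner x (y <• a) = inner x y * a
  inner_smul_right_complex {z : ℂ} {x} {y} : inner x (z • y) = z • inner x y
  star_inner x y : star (inner x y) = inner y x
  norm_eq_sqrt_norm_inner_self x : ‖x‖ = √‖inner x x‖

section Helpers

/-- Right multiplication by `c` as an `R`-linear endomorphism (for left ideals). -/
private def rmulL {R : Type*} [Ring R] (c : R) : R →ₗ[R] R where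
  toFun x := x * c
  map_add' x y := add_mul x y c
  map_smul' r x := by simp [smul_eq_mul, mul_assoc]

/-- Right multiplication by `c` as a `ℂ`-linear endomorphism. -/
private def rmulC {R : Type*} [Ring R] [Algebra ℂ R] (c : R) : R →ₗ[ℂ] R where
  toFun x := x * c
  map_add' x y := add_mul x y c
  map_smul' s x := by simp [smul_mul_assoc]

/-- `x ↦ x - x * c` as a `ℂ`-linear endomorphism. -/
private def gsubC {R : Type*} [Ring R] [Algebra ℂ R] (c : R) : R →ₗ[ℂ] R where
  toFun x := x - x * c
  map_add' x y := by simp only [add_mul]; abel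
  map_smul' s x := by simp [smul_mul_assoc, smul_sub]

private lemma maximalIdeal_isClosed {R : Type*} [NormedRing R] [CompleteSpace R]
    (N : Ideal R) (hN : N.IsMaximal) : IsClosed (N : Set R) := by
  have hone : (1 : R) ∉ closure (N : Set R) := by
    intro hmem
    rw [Metric.mem_closure_iff] at hmem
    obtain ⟨x, hxN, hdist⟩ := hmem 1 one_pos
    have h1 : ‖1 - x‖ < 1 := by rwa [dist_eq_norm] at hdist
    have hx : IsUnit x := sub_sub_self 1 x ▸ (Units.oneSub (1 - x) h1).isUnit
    exact hN.ne_top (N.eq_top_of_isUnit_mem hxN hx)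
  have heq : N.topologicalClosure = N := by
    rcases eq_or_lt_of_le N.le_topologicalClosure with h | h
    · exact h.symm
    · exfalso
      have htop := (Ideal.isMaximal_def.mp hN).2 _ h
      apply hone
      have : (1 : R) ∈ N.topologicalClosure := htop ▸ Submodule.mem_top
      rw [← Submodule.topologicalClosure_coe]; exact this
  have hset : closure (N : Set R) = (N : Set R) := by
    conv_rhs => rw [← heq]
    exact (Submodule.topologicalClosure_coe N).symm
  rw [← hset]
  exact isClosed_closure

end Helpers

private lemma johnson_aux {R : Type*} [NormedRing R] [NormedAlgebra ℂ R] [CompleteSpace R]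
    (N : Ideal R) (hN : N.IsMaximal) (hNc : IsClosed (N : Set R)) (a : R) :
    ∃ (μ : ℂ) (w : R), w - (a - algebraMap ℂ R μ) ∈ N ∧
      (w - 1) * (a - algebraMap ℂ R μ) ∈ N := by
  by_contra hcon
  push_neg at hcon
  set c : ℂ → R := fun μ => a - algebraMap ℂ R μ with hcdef
  have hcN : ∀ μ, c μ ∉ N := fun μ hμ =>
    hcon μ (c μ) (by simp [hcdef]) (N.mul_mem_left _ hμ)
  haveI hsimple : IsSimpleModule R (R ⧸ N) :=
    isSimpleModule_iff_isCoatom.mpr (Ideal.isMaximal_def.mp hN)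
  set L : ℂ → Ideal R := fun μ => Submodule.comap (rmulL (c μ)) N with hLdef
  have hmemL : ∀ (μ : ℂ) (z : R), z ∈ L μ ↔ z * c μ ∈ N := fun μ z => Iff.rfl
  -- Step 1 : L μ ≤ N
  have hLle : ∀ μ, L μ ≤ N := by
    intro μ
    by_contra hle
    obtain ⟨l, hlL, hlN⟩ := SetLike.not_le_iff_exists.mp hle
    have hlt : N < N ⊔ L μ :=
      lt_of_le_of_ne le_sup_left fun h => hlN (h ▸ Submodule.mem_sup_right hlL)
    have hsup : N ⊔ L μ = ⊤ := (Ideal.isMaximal_def.mp hN).2 _ hlt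
    have hmem : c μ - 1 ∈ N ⊔ L μ := by rw [hsup]; trivial
    obtain ⟨n, hn, l', hl', hsum⟩ := Submodule.mem_sup.mp hmem
    refine hcon μ (c μ - n) (by simpa [hcdef] using N.neg_mem hn) ?_
    have hw1 : c μ - n - 1 = l' := by
      have h := hsum
      have : l' = c μ - 1 - n := by rw [← h]; abel
      rw [this]; abel
    rw [hw1]
    exact (hmemL μ l').mp hl'
  -- Step 2 : L μ = N
  have hLeq : ∀ (μ : ℂ) (z : R), z * c μ ∈ N ↔ z ∈ N := by
    intro μ
    have hLN : L μ = N := by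
      set f : R →ₗ[R] R ⧸ N := N.mkQ.comp (rmulL (c μ)) with hf
      have hker : LinearMap.ker f = L μ := by
        ext x
        simp only [hf, LinearMap.mem_ker, LinearMap.comp_apply, Submodule.mkQ_apply,
          Submodule.Quotient.mk_eq_zero]
        exact Iff.rfl
      have hrange : LinearMap.range f = ⊤ := by
        rcases eq_bot_or_eq_top (LinearMap.range f) with hbot | htop
        · exfalso
          have h1 : f 1 ∈ LinearMap.range f := LinearMap.mem_range_self f 1
          rw [hbot, Submodule.mem_bot] at h1
          have h2 : (1 : R) * c μ ∈ N := by
            simp only [hf, LinearMap.comp_apply, Submodule.mkQ_apply,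
              Submodule.Quotient.mk_eq_zero] at h1; exact h1
          exact hcN μ (by simpa using h2)
        · exact htop
      have e : (R ⧸ L μ) ≃ₗ[R] R ⧸ N :=
        (Submodule.quotEquivOfEq _ _ hker.symm).trans
          ((LinearMap.quotKerEquivRange f).trans (LinearEquiv.ofTop _ hrange))
      haveI : IsSimpleModule R (R ⧸ L μ) := IsSimpleModule.congr e
      have hco : IsCoatom (L μ) := isSimpleModule_iff_isCoatom.mp this
      rcases eq_or_lt_of_le (hLle μ) with h | h
      · exact h
      · exact absurd (hco.2 N h) hN.ne_top
    intro z
    constructor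
    · intro hz
      rw [← hLN]; exact hz
    · intro hz
      exact (hmemL μ z).mp (hLN ▸ hz)
  -- the quotient Banach space
  haveI hNcℂ : IsClosed ((N.restrictScalars ℂ : Submodule ℂ R) : Set R) := hNc
  have hone : (1 : R) ∉ N := (Ideal.ne_top_iff_one N).mp hN.ne_top
  haveI hVnt : Nontrivial (R ⧸ N.restrictScalars ℂ) := by
    refine ⟨⟨Submodule.Quotient.mk 1, 0, fun h => ?_⟩⟩
    rw [Submodule.Quotient.mk_eq_zero] at h
    exact hone (by simpa using h)
  -- bounded right multiplications on the quotient
  have key : ∀ c₀ : R, (∀ n ∈ N, n * c₀ ∈ N) →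
      ∃ T : (R ⧸ N.restrictScalars ℂ) →L[ℂ] (R ⧸ N.restrictScalars ℂ), ∀ x : R,
        T (Submodule.Quotient.mk x) = Submodule.Quotient.mk (x * c₀) := by
    intro c₀ hc₀
    set f : R →ₗ[ℂ] (R ⧸ N.restrictScalars ℂ) :=
      (N.restrictScalars ℂ).mkQ.comp (rmulC c₀) with hf
    have hker : N.restrictScalars ℂ ≤ LinearMap.ker f := by
      intro n hn
      have hn' : n ∈ N := by simpa using hn
      simp only [hf, LinearMap.mem_ker, LinearMap.comp_apply, Submodule.mkQ_apply,
        Submodule.Quotient.mk_eq_zero]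
      exact hc₀ n hn'
    set T₀ : (R ⧸ N.restrictScalars ℂ) →ₗ[ℂ] (R ⧸ N.restrictScalars ℂ) :=
      Submodule.liftQ _ f hker with hT₀def
    have hT₀ : ∀ x : R, T₀ (Submodule.Quotient.mk x) = Submodule.Quotient.mk (x * c₀) :=
      fun x => rfl
    have hbound : ∀ v, ‖T₀ v‖ ≤ ‖c₀‖ * ‖v‖ := by
      intro v
      refine le_of_forall_pos_le_add ?_
      intro ε hε
      have hδ : 0 < ε / (‖c₀‖ + 1) := div_pos hε (by positivity)
      obtain ⟨y, hy, hylt⟩ := Submodule.Quotient.norm_mk_lt v hδ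
      have hTv : T₀ v = Submodule.Quotient.mk (y * c₀) := by rw [← hy, hT₀]
      rw [hTv]
      calc ‖(Submodule.Quotient.mk (y * c₀) : R ⧸ N.restrictScalars ℂ)‖
          ≤ ‖y * c₀‖ := Submodule.Quotient.norm_mk_le _ _
        _ ≤ ‖y‖ * ‖c₀‖ := norm_mul_le _ _
        _ ≤ (‖v‖ + ε / (‖c₀‖ + 1)) * ‖c₀‖ :=
            mul_le_mul_of_nonneg_right (le_of_lt hylt) (norm_nonneg _)
        _ ≤ ‖c₀‖ * ‖v‖ + ε := by
            have h1 : ε / (‖c₀‖ + 1) * ‖c₀‖ ≤ ε := by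
              rw [div_mul_eq_mul_div, div_le_iff₀ (by positivity)]
              nlinarith [norm_nonneg c₀, le_of_lt hε]
            nlinarith [norm_nonneg c₀, norm_nonneg v]
    exact ⟨T₀.mkContinuous ‖c₀‖ hbound, hT₀⟩
  -- T = right multiplication by a
  have hNa : ∀ n ∈ N, n * a ∈ N := by
    intro n hn
    have h := (hLeq 0 n).mpr hn
    simpa [hcdef] using h
  obtain ⟨T, hT⟩ := key a hNa
  haveI : Nontrivial ((R ⧸ N.restrictScalars ℂ) →L[ℂ] (R ⧸ N.restrictScalars ℂ)) := by
    refine ⟨1, 0, fun h => ?_⟩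
    have h1 := congrFun (congrArg DFunLike.coe h)
      (Submodule.Quotient.mk 1 : R ⧸ N.restrictScalars ℂ)
    simp only [ContinuousLinearMap.one_apply, ContinuousLinearMap.zero_apply] at h1
    rw [Submodule.Quotient.mk_eq_zero] at h1
    exact hone (by simpa using h1)
  obtain ⟨μ, hμ⟩ := spectrum.nonempty T
  rw [spectrum.mem_iff] at hμ
  apply hμ
  -- construct the inverse of `algebraMap μ - T`
  obtain ⟨z, hz⟩ : ∃ z : R, z * c μ - 1 ∈ N := by
    have hcμ : (Submodule.Quotient.mk (c μ) : R ⧸ N) ≠ 0 := fun h =>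
      hcN μ (by simpa using (Submodule.Quotient.mk_eq_zero N).mp h)
    have hspan : Submodule.span R {(Submodule.Quotient.mk (c μ) : R ⧸ N)} = ⊤ := by
      rcases eq_bot_or_eq_top (Submodule.span R {(Submodule.Quotient.mk (c μ) : R ⧸ N)})
        with hbot | htop
      · exfalso
        have h3 : (Submodule.Quotient.mk (c μ) : R ⧸ N) ∈
            Submodule.span R {(Submodule.Quotient.mk (c μ) : R ⧸ N)} :=
          Submodule.mem_span_singleton_self _
        rw [hbot, Submodule.mem_bot] at h3
        exact hcμ h3
      · exact htop
    have h2 : (Submodule.Quotient.mk 1 : R ⧸ N) ∈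
        Submodule.span R {(Submodule.Quotient.mk (c μ) : R ⧸ N)} := by
      rw [hspan]; trivial
    obtain ⟨z, hz⟩ := Submodule.mem_span_singleton.mp h2
    refine ⟨z, ?_⟩
    have hz' : (Submodule.Quotient.mk (z * c μ) : R ⧸ N) = Submodule.Quotient.mk 1 := by
      rw [← smul_eq_mul, Submodule.Quotient.mk_smul, hz]
    rw [← Submodule.Quotient.mk_eq_zero (p := N), Submodule.Quotient.mk_sub, hz', sub_self]
  have hNz : ∀ n ∈ N, n * z ∈ N := by
    intro n hn
    have h1 : (n * z) * c μ ∈ N := by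
      have heq : (n * z) * c μ = n * (z * c μ - 1) + n := by noncomm_ring
      rw [heq]
      exact N.add_mem (N.mul_mem_left n hz) hn
    exact (hLeq μ _).mp h1
  obtain ⟨S, hS⟩ := key z hNz
  set U := algebraMap ℂ ((R ⧸ N.restrictScalars ℂ) →L[ℂ] (R ⧸ N.restrictScalars ℂ)) μ - T
    with hU
  have hUmk : ∀ x : R, U (Submodule.Quotient.mk x) = - Submodule.Quotient.mk (x * c μ) := by
    intro x
    have h1 : algebraMap ℂ ((R ⧸ N.restrictScalars ℂ) →L[ℂ] (R ⧸ N.restrictScalars ℂ)) μ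
        (Submodule.Quotient.mk x) = Submodule.Quotient.mk (μ • x) := by
      rw [Algebra.algebraMap_eq_smul_one]
      simp [Submodule.Quotient.mk_smul]
    have h2 : μ • x - x * a = -(x * c μ) := by
      have : x * algebraMap ℂ R μ = μ • x := by
        rw [← Algebra.commutes, ← Algebra.smul_def]
      simp only [hcdef, mul_sub, this]
      abel
    simp only [hU, ContinuousLinearMap.sub_apply, h1, hT]
    rw [← Submodule.Quotient.mk_sub, h2, ← Submodule.Quotient.mk_neg]
  have hUS : U * (-S) = 1 := by
    refine ContinuousLinearMap.ext fun v => ?_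
    obtain ⟨x, rfl⟩ := Submodule.Quotient.mk_surjective _ v
    rw [ContinuousLinearMap.mul_apply, ContinuousLinearMap.one_apply,
      ContinuousLinearMap.neg_apply, hS, ← Submodule.Quotient.mk_neg, hUmk, neg_mul,
      Submodule.Quotient.mk_neg, neg_neg, mul_assoc]
    have hmem : x * (z * c μ) - x ∈ N := by
      have heq : x * (z * c μ) - x = x * (z * c μ - 1) := by noncomm_ring
      rw [heq]
      exact N.mul_mem_left x hz
    rw [← sub_eq_zero, ← Submodule.Quotient.mk_sub, Submodule.Quotient.mk_eq_zero]
    simpa using hmem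
  have hUinj : Function.Injective U := by
    have hker : ∀ v, U v = 0 → v = 0 := by
      intro v hv
      obtain ⟨x, rfl⟩ := Submodule.Quotient.mk_surjective _ v
      rw [hUmk, neg_eq_zero, Submodule.Quotient.mk_eq_zero] at hv
      rw [Submodule.Quotient.mk_eq_zero]
      have : x * c μ ∈ N := by simpa using hv
      simpa using (hLeq μ x).mp this
    intro v w hvw
    have : U (v - w) = 0 := by rw [map_sub, hvw, sub_self]
    have := hker _ this
    rwa [sub_eq_zero] at this
  have hSU : (-S) * U = 1 := by
    refine ContinuousLinearMap.ext fun v => ?_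
    apply hUinj
    have := congrFun (congrArg DFunLike.coe hUS) (U v)
    simp only [ContinuousLinearMap.mul_apply, ContinuousLinearMap.one_apply] at this ⊢
    exact this
  exact ⟨⟨U, -S, hUS, hSU⟩, rfl⟩

/-- The inclusion `B → Unitization ℂ B` as a `ℂ`-linear map. -/
private noncomputable def inrL (B : Type*) [NonUnitalCStarAlgebra B] :
    B →ₗ[ℂ] Unitization ℂ B where
  toFun x := x
  map_add' x y := by simp
  map_smul' s x := by simp [Unitization.inr_smul]

private lemma johnson_invariance {B : Type*} [NonUnitalCStarAlgebra B] (Φ : B →ₗ[ℂ] B)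
    (hΦ : ∀ J : Submodule ℂ B, IsClosed (J : Set B) →
      (∀ a : B, ∀ j ∈ J, a * j ∈ J) → ∀ j ∈ J, Φ j ∈ J)
    (N : Ideal (Unitization ℂ B)) (hNc : IsClosed (N : Set (Unitization ℂ B)))
    (g : Unitization ℂ B →ₗ[ℂ] Unitization ℂ B) (hgc : Continuous g)
    (hgmul : ∀ y x : Unitization ℂ B, g (y * x) = y * g x)
    (j : B) (hj : g ↑j ∈ N) : g ↑(Φ j) ∈ N := by
  set J : Submodule ℂ B := (N.restrictScalars ℂ).comap (g.comp (inrL B)) with hJ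
  have hmem : ∀ x : B, x ∈ J ↔ g ↑x ∈ N := fun x => by
    simp [hJ, Submodule.mem_comap, inrL]
  have hJc : IsClosed (J : Set B) := by
    have : (J : Set B) = (fun x : B => g ↑x) ⁻¹' (N : Set (Unitization ℂ B)) := by
      ext x; simp [hmem x]
    rw [this]
    exact hNc.preimage (hgc.comp (Unitization.isometry_inr (𝕜 := ℂ) (A := B)).continuous)
  have hJl : ∀ x : B, ∀ k ∈ J, x * k ∈ J := by
    intro x k hk
    rw [hmem] at hk ⊢
    rw [Unitization.inr_mul, hgmul]
    exact N.mul_mem_left _ hk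
  have := hΦ J hJc hJl j ((hmem j).mpr hj)
  exact (hmem _).mp this


variable {A E : Type*} [NonUnitalCStarAlgebra A] [PartialOrder A] [StarOrderedRing A]
  [NormedAddCommGroup E] [NormedSpace ℂ E] [SMul Aᵐᵒᵖ E] [CStarModuleOld A E]

/-- Johnson's theorem for C*-algebras: a linear map on a C*-algebra leaving every closed left
ideal invariant satisfies `Φ(ba) = Φ(b)a`. -/
theorem johnson {B : Type*} [NonUnitalCStarAlgebra B] (Φ : B →ₗ[ℂ] B)
    (hΦ : ∀ J : Submodule ℂ B, IsClosed (J : Set B) →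
      (∀ a : B, ∀ j ∈ J, a * j ∈ J) → ∀ j ∈ J, Φ j ∈ J) :
    ∀ a b : B, Φ (b * a) = Φ b * a := by
  intro a b
  -- the element `Φ (b * a) - Φ b * a` lies in every maximal left ideal of the unitization
  have main : ∀ N : Ideal (Unitization ℂ B), N.IsMaximal →
      (↑(Φ (b * a) - Φ b * a) : Unitization ℂ B) ∈ N := by
    intro N hN
    have hNc := maximalIdeal_isClosed N hN
    obtain ⟨μ, w, hw1, hw2⟩ := johnson_aux N hN hNc (↑a : Unitization ℂ B)
    set c : Unitization ℂ B := ↑a - algebraMap ℂ (Unitization ℂ B) μ with hc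
    -- `u` is `b * w` pushed into `B`
    set u : B := w.fst • b + b * w.snd with hu
    have huw : (↑u : Unitization ℂ B) = ↑b * w := by
      refine Unitization.ext ?_ ?_
      · simp [Unitization.fst_mul]
      · simp [hu, Unitization.snd_mul]
    have hsm : ∀ x : Unitization ℂ B, μ • x = x * algebraMap ℂ (Unitization ℂ B) μ :=
      fun x => by rw [← Algebra.commutes, ← Algebra.smul_def]
    -- membership facts
    have h1 : (↑(u - (b * a - μ • b)) : Unitization ℂ B) ∈ N := by
      have e : (↑(u - (b * a - μ • b)) : Unitization ℂ B) = ↑b * (w - c) := by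
        simp only [Unitization.inr_sub, Unitization.inr_smul, Unitization.inr_mul, huw, hc, hsm]
        noncomm_ring
      rw [e]; exact N.mul_mem_left _ hw1
    have h2 : (↑(u - b) : Unitization ℂ B) * c ∈ N := by
      have e : (↑(u - b) : Unitization ℂ B) * c = ↑b * ((w - 1) * c) := by
        rw [Unitization.inr_sub, huw]; noncomm_ring
      rw [e]; exact N.mul_mem_left _ hw2
    have h3 : (↑u : Unitization ℂ B) - ↑u * c ∈ N := by
      have e : (↑u : Unitization ℂ B) - ↑u * c = ↑b * ((w - c) - (w - 1) * c) := by
        rw [huw]; noncomm_ring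
      rw [e]; exact N.mul_mem_left _ (N.sub_mem hw1 hw2)
    -- apply Φ-invariance to three closed left ideals
    have H1 : (↑(Φ u) : Unitization ℂ B) - ↑(Φ (b * a)) + μ • ↑(Φ b) ∈ N := by
      have := johnson_invariance Φ hΦ N hNc LinearMap.id continuous_id
        (fun y x => rfl) (u - (b * a - μ • b)) h1
      simpa [map_sub, map_smul, Unitization.inr_sub, Unitization.inr_smul, sub_add] using this
    have H2 : (↑(Φ u) : Unitization ℂ B) * c - ↑(Φ b) * c ∈ N := by
      have hcont : Continuous (rmulC c) := continuous_mul_right c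
      have := johnson_invariance Φ hΦ N hNc (rmulC c) hcont
        (fun y x => mul_assoc y x c) (u - b)
        (by simpa only [rmulC, LinearMap.coe_mk, AddHom.coe_mk] using h2)
      simpa only [map_sub, rmulC, LinearMap.coe_mk, AddHom.coe_mk,
        Unitization.inr_sub] using this
    have H3 : (↑(Φ u) : Unitization ℂ B) - ↑(Φ u) * c ∈ N := by
      have hcont : Continuous (gsubC c) := continuous_id.sub (continuous_mul_right c)
      have := johnson_invariance Φ hΦ N hNc (gsubC c) hcont
        (fun y x => by simp only [gsubC, LinearMap.coe_mk, AddHom.coe_mk, mul_sub, mul_assoc])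
        u (by simpa only [gsubC, LinearMap.coe_mk, AddHom.coe_mk] using h3)
      simpa only [gsubC, LinearMap.coe_mk, AddHom.coe_mk] using this
    -- combine
    have hsum := N.add_mem (N.add_mem (N.neg_mem H1) H3) H2
    have e : -((↑(Φ u) : Unitization ℂ B) - ↑(Φ (b * a)) + μ • ↑(Φ b)) +
        ((↑(Φ u) : Unitization ℂ B) - ↑(Φ u) * c) +
        ((↑(Φ u) : Unitization ℂ B) * c - ↑(Φ b) * c)
        = ↑(Φ (b * a) - Φ b * a) := by
      simp only [Unitization.inr_sub, Unitization.inr_mul, hc, hsm]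
      noncomm_ring
    rwa [e] at hsum
  -- now conclude `Φ (b * a) - Φ b * a = 0`
  by_contra hne
  have hDne : (↑(Φ (b * a) - Φ b * a) : Unitization ℂ B) ≠ 0 := by
    intro h
    apply hne
    have h0 : Φ (b * a) - Φ b * a = 0 :=
      Unitization.inr_injective (h.trans (Unitization.inr_zero ℂ).symm)
    rw [sub_eq_zero] at h0
    exact h0
  set y : Unitization ℂ B := ↑(Φ (b * a) - Φ b * a) with hy
  have hsa : IsSelfAdjoint (star y * y) := IsSelfAdjoint.star_mul_self y
  have hdne : star y * y ≠ 0 := by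
    intro h
    apply hDne
    have h2 : ‖y‖ * ‖y‖ = 0 := by rw [← CStarRing.norm_star_mul_self, h, norm_zero]
    exact norm_eq_zero.mp (mul_self_eq_zero.mp h2)
  obtain ⟨μ, hμmem, hμne⟩ : ∃ μ : ℂ, μ ∈ spectrum ℂ (star y * y) ∧ μ ≠ 0 := by
    by_contra hcon
    push_neg at hcon
    have hrad : spectralRadius ℂ (star y * y) = 0 := by
      refine le_antisymm ?_ zero_le
      refine iSup₂_le fun k hk => ?_
      simp [hcon k hk]
    rw [hsa.spectralRadius_eq_nnnorm] at hrad
    exact hdne (by simpa using hrad)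
  have hμre : (μ.re : ℂ) = μ := (hsa.mem_spectrum_eq_re hμmem).symm
  have hstarμ : star (algebraMap ℂ (Unitization ℂ B) μ) = algebraMap ℂ (Unitization ℂ B) μ := by
    rw [Algebra.algebraMap_eq_smul_one, star_smul, star_one, ← hμre, Complex.star_def,
      Complex.conj_ofReal]
  have hnotleft : ∀ z : Unitization ℂ B,
      z * (star y * y - algebraMap ℂ (Unitization ℂ B) μ) ≠ 1 := by
    intro z hz1
    apply spectrum.mem_iff.mp hμmem
    have hzstar : (star y * y - algebraMap ℂ (Unitization ℂ B) μ) * star z = 1 := by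
      have h := congrArg star hz1
      rwa [star_mul, star_sub, hstarμ, hsa.star_eq, star_one] at h
    have hzz : star z = z := by
      calc star z = 1 * star z := (one_mul _).symm
        _ = (z * (star y * y - algebraMap ℂ (Unitization ℂ B) μ)) * star z := by rw [hz1]
        _ = z * ((star y * y - algebraMap ℂ (Unitization ℂ B) μ) * star z) := by
            rw [mul_assoc]
        _ = z := by rw [hzstar, mul_one]
    have hunit : IsUnit (star y * y - algebraMap ℂ (Unitization ℂ B) μ) := by
      refine ⟨⟨star y * y - algebraMap ℂ (Unitization ℂ B) μ, z, ?_, hz1⟩, rfl⟩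
      rw [← hzz]; exact hzstar
    have := hunit.neg
    rwa [neg_sub] at this
  have hproper : Ideal.span {star y * y - algebraMap ℂ (Unitization ℂ B) μ} ≠ ⊤ := by
    intro htop
    have h1 : (1 : Unitization ℂ B) ∈
        Ideal.span {star y * y - algebraMap ℂ (Unitization ℂ B) μ} := by
      rw [htop]; trivial
    obtain ⟨z, hz⟩ := Submodule.mem_span_singleton.mp h1
    exact hnotleft z (by rwa [smul_eq_mul] at hz)
  obtain ⟨N, hNmax, hle⟩ := Ideal.exists_le_maximal _ hproper
  have hyN : y ∈ N := main N hNmax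
  have hdN : star y * y ∈ N := N.mul_mem_left (star y) hyN
  have hcμN : star y * y - algebraMap ℂ (Unitization ℂ B) μ ∈ N :=
    hle (Ideal.subset_span (Set.mem_singleton _))
  have hμN : algebraMap ℂ (Unitization ℂ B) μ ∈ N := by
    have := N.sub_mem hdN hcμN
    simpa using this
  have h1N : (1 : Unitization ℂ B) ∈ N := by
    have h2 := N.mul_mem_left (algebraMap ℂ (Unitization ℂ B) μ⁻¹) hμN
    rwa [← map_mul, inv_mul_cancel₀ hμne, map_one] at h2
  exact hNmax.ne_top ((Ideal.eq_top_iff_one N).mpr h1N)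
end

section
/- Let A be a C*-algebra acting isometrically and non-degenerately on a Banach space X. Define LM_X(A) = {b ∈ B(X) : ba ∈ A for all a ∈ A}. Then the map b ↦ L_b (left multiplication by b on A) is an isometric Banach algebra isomorphism from LM_X(A) onto the algebra LC(A) of bounded left centralizers of A. -/
open scoped InnerProductSpace RightActions
open Filter Topology

variable {A E : Type*} [NonUnitalCStarAlgebra A] [PartialOrder A] [StarOrderedRing A]
  [NormedAddCommGroup E] [NormedSpace ℂ E] [SMul Aᵐᵒᵖ E] [RightCStarModule A E]

section AuxOrder
open Unitization
open scoped CStarAlgebra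
variable {B : Type*} [NonUnitalCStarAlgebra B]

noncomputable def myPO : PartialOrder B :=
  letI := CStarAlgebra.spectralOrder (B⁺¹)
  PartialOrder.lift (inr (R := ℂ)) (inr_injective (R := ℂ))

lemma mySOR : letI := myPO (B := B); StarOrderedRing B := by
  letI := myPO (B := B)
  letI := CStarAlgebra.spectralOrder (B⁺¹)
  haveI := CStarAlgebra.spectralOrderedRing (B⁺¹)
  refine ⟨fun a b => ?_⟩
  constructor
  · intro hab
    set c := b - a with hc
    have hinr : (b : B⁺¹) - (a : B⁺¹) = (c : B⁺¹) := (inr_sub ℂ b a).symm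
    have hle : (a : B⁺¹) ≤ (b : B⁺¹) := hab
    have hsa' : IsSelfAdjoint ((c : B⁺¹)) := hinr ▸ hle.1
    have hsa : IsSelfAdjoint c := by
      have := hsa'.star_eq
      rw [← inr_star] at this
      exact inr_injective (R := ℂ) this
    have hspec : ∀ x ∈ quasispectrum ℝ c, 0 ≤ x := by
      rw [Unitization.quasispectrum_eq_spectrum_inr' ℝ ℂ c]
      exact SpectrumRestricts.nnreal_iff.mp (hinr ▸ hle.2)
    refine ⟨c, ?_, by simp [hc]⟩
    apply AddSubmonoid.subset_closure
    set s := cfcₙ (fun t : ℝ => Real.sqrt t) c with hs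
    have hssa : IsSelfAdjoint s := cfcₙ_predicate _ c
    refine ⟨s, ?_⟩
    show star s * s = c
    rw [hssa.star_eq, hs, ← cfcₙ_mul _ _ c (by fun_prop) (by simp) (by fun_prop) (by simp)]
    calc cfcₙ (fun t : ℝ => Real.sqrt t * Real.sqrt t) c
        = cfcₙ (id : ℝ → ℝ) c := by
          apply cfcₙ_congr
          intro x hx
          simpa using Real.mul_self_sqrt (hspec x hx)
      _ = c := cfcₙ_id ℝ c hsa
  · rintro ⟨p, hp, rfl⟩
    show (a : B⁺¹) ≤ ((a + p : B) : B⁺¹)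
    have h0 : (0 : B⁺¹) ≤ (p : B⁺¹) := by
      rw [StarOrderedRing.nonneg_iff]
      have := AddSubmonoid.mem_map_of_mem (Unitization.inrNonUnitalStarAlgHom ℂ B) hp
      rw [AddMonoidHom.map_mclosure, ← Set.range_comp] at this
      refine AddSubmonoid.closure_mono ?_ this
      rintro _ ⟨s, rfl⟩
      exact ⟨(s : B⁺¹), by simp⟩
    calc (a : B⁺¹) = (a : B⁺¹) + 0 := (add_zero _).symm
      _ ≤ (a : B⁺¹) + (p : B⁺¹) := by gcongr
      _ = ((a + p : B) : B⁺¹) := (inr_add ℂ a p).symm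

lemma myApprox (s : Finset B) {ε : ℝ} (hε : 0 < ε) :
    ∃ e : B, ‖e‖ ≤ 1 ∧ ∀ a ∈ s, ‖e * a - a‖ < ε := by
  letI := myPO (B := B)
  haveI := mySOR (B := B)
  have h := CStarAlgebra.increasingApproximateUnit (A := B)
  haveI : (CStarAlgebra.approximateUnit B).NeBot := h.toIsApproximateUnit.neBot
  have h2 : ∀ᶠ e in CStarAlgebra.approximateUnit B, ∀ a ∈ s, ‖e * a - a‖ < ε := by
    rw [Filter.eventually_all_finset]
    intro a _
    have ht := h.tendsto_mul_right a
    have := Metric.tendsto_nhds.mp ht ε hε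
    filter_upwards [this] with e he
    rwa [dist_eq_norm] at he
  obtain ⟨e, he1, he2⟩ := (h.eventually_norm.and h2).exists
  exact ⟨e, he1, he2⟩

end AuxOrder

/-- Let the C*-algebra `A` act isometrically and non-degenerately on a Banach space `X` via `π`.
Then `b ↦ L_b` is an isometric Banach algebra isomorphism from
`LM_X(A) = {b ∈ B(X) : bA ⊆ A}` onto the left centralizer algebra `LC(A)`: each `b ∈ LM_X(A)`
determines a unique bounded map `Φ` on `A` with `π (Φ a) = b ∘ π a`; this `Φ` is a left
centralizer with `‖Φ‖ = ‖b‖`; and every bounded left centralizer of `A` arises this way from a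
unique `b ∈ LM_X(A)`. -/
theorem LM_iso_LC {B' : Type*} [NonUnitalCStarAlgebra B']
    {X : Type*} [NormedAddCommGroup X] [NormedSpace ℂ X] [CompleteSpace X]
    (π : B' →ₗ[ℂ] (X →L[ℂ] X))
    (hπmul : ∀ a b : B', π (a * b) = π a ∘L π b)
    (hπiso : ∀ a : B', ‖π a‖ = ‖a‖)
    (hπnondeg : Dense ((Submodule.span ℂ {x : X | ∃ (a : B') (y : X), x = π a y}) : Set X)) :
    -- every `b ∈ LM_X(A)` induces a unique bounded map `L_b = Φ` on `A`, which is a left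
    -- centralizer of the same norm
    (∀ b : X →L[ℂ] X, (∀ a : B', ∃ c : B', b ∘L π a = π c) →
      ∃! Φ : B' →L[ℂ] B', ∀ a : B', π (Φ a) = b ∘L π a) ∧
    (∀ (b : X →L[ℂ] X) (Φ : B' →L[ℂ] B'), (∀ a : B', π (Φ a) = b ∘L π a) →
      (∀ a c : B', Φ (a * c) = Φ a * c) ∧ ‖Φ‖ = ‖b‖) ∧
    -- surjectivity: every bounded left centralizer arises from a unique left multiplier
    (∀ Φ : B' →L[ℂ] B', (∀ a c : B', Φ (a * c) = Φ a * c) →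
      ∃! b : X →L[ℂ] X, (∀ a : B', ∃ c : B', b ∘L π a = π c) ∧
        ∀ a : B', π (Φ a) = b ∘L π a) := by
  classical
  set S : Set X := {x : X | ∃ (a : B') (y : X), x = π a y} with hSdef
  have hπinj : Function.Injective π := by
    intro a b h
    have h2 := hπiso (a - b)
    rw [map_sub, h, sub_self, norm_zero] at h2
    rw [← sub_eq_zero, ← norm_eq_zero, ← h2]
  have hrep : ∀ x ∈ Submodule.span ℂ S, ∃ (n : ℕ) (a : Fin n → B') (y : Fin n → X),
      x = ∑ i, π (a i) (y i) := by
    intro x hx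
    obtain ⟨n, f, g, hfg⟩ := Submodule.mem_span_set'.mp hx
    choose a y hy using fun i : Fin n => (g i).2
    refine ⟨n, a, fun i => f i • y i, ?_⟩
    rw [← hfg]
    refine Finset.sum_congr rfl fun i _ => ?_
    rw [hy i, (π (a i)).map_smul]
  -- key estimate
  have key : ∀ (Φ : B' →L[ℂ] B'), (∀ a c : B', Φ (a * c) = Φ a * c) →
      ∀ (n : ℕ) (a : Fin n → B') (y : Fin n → X),
      ‖∑ i, π (Φ (a i)) (y i)‖ ≤ ‖Φ‖ * ‖∑ i, π (a i) (y i)‖ := by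
    intro Φ hΦ n a y
    refine le_of_forall_pos_le_add fun ε hε => ?_
    set M := ∑ i, ‖y i‖ with hM
    have hM0 : 0 ≤ M := Finset.sum_nonneg fun i _ => norm_nonneg _
    set δ := ε / ((‖Φ‖ + 1) * (M + 1)) with hδ
    have hδpos : 0 < δ := by positivity
    obtain ⟨e, he1, he2⟩ := myApprox (Finset.univ.image a) hδpos
    set x := ∑ i, π (a i) (y i) with hx
    have hcomm : π (Φ e) x = ∑ i, π (Φ (e * a i)) (y i) := by
      rw [hx, map_sum]
      refine Finset.sum_congr rfl fun i _ => ?_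
      rw [hΦ, hπmul]
      rfl
    have hterm : ∀ i : Fin n, ‖π (Φ (a i)) (y i) - π (Φ (e * a i)) (y i)‖ ≤ ‖Φ‖ * δ * ‖y i‖ := by
      intro i
      have h1 : π (Φ (a i)) (y i) - π (Φ (e * a i)) (y i) = π (Φ (a i - e * a i)) (y i) := by
        rw [map_sub Φ, map_sub π]
        rfl
      rw [h1]
      calc ‖π (Φ (a i - e * a i)) (y i)‖ ≤ ‖π (Φ (a i - e * a i))‖ * ‖y i‖ :=
            (π (Φ (a i - e * a i))).le_opNorm _
        _ ≤ ‖Φ‖ * δ * ‖y i‖ := by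
            rw [hπiso]
            have h3 : ‖a i - e * a i‖ ≤ δ := by
              rw [norm_sub_rev]
              exact (he2 (a i) (Finset.mem_image_of_mem a (Finset.mem_univ i))).le
            have h4 : ‖Φ (a i - e * a i)‖ ≤ ‖Φ‖ * δ :=
              (Φ.le_opNorm _).trans (by gcongr)
            gcongr
    calc ‖∑ i, π (Φ (a i)) (y i)‖
        = ‖(∑ i, π (Φ (a i)) (y i) - π (Φ e) x) + π (Φ e) x‖ := by rw [sub_add_cancel]
      _ ≤ ‖∑ i, π (Φ (a i)) (y i) - π (Φ e) x‖ + ‖π (Φ e) x‖ := norm_add_le _ _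
      _ ≤ ‖Φ‖ * δ * M + ‖Φ‖ * ‖x‖ := by
          gcongr
          · rw [hcomm, ← Finset.sum_sub_distrib]
            calc ‖∑ i, (π (Φ (a i)) (y i) - π (Φ (e * a i)) (y i))‖
                ≤ ∑ i, ‖π (Φ (a i)) (y i) - π (Φ (e * a i)) (y i)‖ := norm_sum_le _ _
              _ ≤ ∑ i, ‖Φ‖ * δ * ‖y i‖ := Finset.sum_le_sum fun i _ => hterm i
              _ = ‖Φ‖ * δ * M := by rw [hM, Finset.mul_sum]
          · calc ‖π (Φ e) x‖ ≤ ‖π (Φ e)‖ * ‖x‖ := (π (Φ e)).le_opNorm _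
              _ ≤ ‖Φ‖ * ‖x‖ := by
                  rw [hπiso]
                  have := (Φ.le_opNorm e).trans (by
                    calc ‖Φ‖ * ‖e‖ ≤ ‖Φ‖ * 1 := by gcongr
                      _ = ‖Φ‖ := mul_one _)
                  gcongr
      _ ≤ ‖Φ‖ * ‖x‖ + ε := by
          rw [add_comm]
          gcongr
          have hfrac : ‖Φ‖ * M ≤ (‖Φ‖ + 1) * (M + 1) := by nlinarith [norm_nonneg Φ]
          calc ‖Φ‖ * δ * M = (‖Φ‖ * M) * δ := by ring
            _ ≤ ((‖Φ‖ + 1) * (M + 1)) * δ := by gcongr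
            _ = ε := by
                rw [hδ]
                field_simp
  -- derive centralizer property from intertwining
  have hcentOf : ∀ (b : X →L[ℂ] X) (Φ : B' →L[ℂ] B'), (∀ a : B', π (Φ a) = b ∘L π a) →
      ∀ a c : B', Φ (a * c) = Φ a * c := by
    intro b Φ hbΦ a c
    apply hπinj
    rw [hbΦ, hπmul, hπmul, hbΦ, ← ContinuousLinearMap.comp_assoc]
  refine ⟨?_, ?_, ?_⟩
  · -- part 1
    intro b hb
    choose c hc using hb
    have hadd : ∀ a a', c (a + a') = c a + c a' := by
      intro a a'
      apply hπinj
      rw [map_add, ← hc, ← hc, ← hc, map_add, ContinuousLinearMap.comp_add]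
    have hsmul : ∀ (r : ℂ) (a : B'), c (r • a) = r • c a := by
      intro r a
      apply hπinj
      rw [map_smul, ← hc, ← hc, map_smul, ContinuousLinearMap.comp_smul]
    let Φ₀ : B' →ₗ[ℂ] B' := { toFun := c, map_add' := hadd, map_smul' := hsmul }
    have hbound : ∀ a, ‖Φ₀ a‖ ≤ ‖b‖ * ‖a‖ := by
      intro a
      rw [← hπiso]
      show ‖π (c a)‖ ≤ ‖b‖ * ‖a‖
      rw [← hc, ← hπiso a]
      exact (b.opNorm_comp_le (π a))
    refine ⟨Φ₀.mkContinuous ‖b‖ hbound, fun a => (hc a).symm, ?_⟩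
    intro Ψ hΨ
    ext a
    apply hπinj
    rw [hΨ a, hc a]
    rfl
  · -- part 2
    intro b Φ hbΦ
    have hcent := hcentOf b Φ hbΦ
    refine ⟨hcent, le_antisymm ?_ ?_⟩
    · refine Φ.opNorm_le_bound (norm_nonneg b) fun a => ?_
      rw [← hπiso, hbΦ, ← hπiso a]
      exact b.opNorm_comp_le (π a)
    · refine b.opNorm_le_bound (norm_nonneg Φ) fun x => ?_
      have hsub : (Submodule.span ℂ S : Set X) ⊆ {x : X | ‖b x‖ ≤ ‖Φ‖ * ‖x‖} := by
        intro x hx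
        obtain ⟨n, a, y, rfl⟩ := hrep x hx
        have hbx : b (∑ i, π (a i) (y i)) = ∑ i, π (Φ (a i)) (y i) := by
          rw [map_sum]
          refine Finset.sum_congr rfl fun i _ => ?_
          rw [hbΦ]
          rfl
        show ‖b (∑ i, π (a i) (y i))‖ ≤ ‖Φ‖ * ‖∑ i, π (a i) (y i)‖
        rw [hbx]
        exact key Φ hcent n a y
      have hClosed : IsClosed {x : X | ‖b x‖ ≤ ‖Φ‖ * ‖x‖} :=
        isClosed_le (by fun_prop) (by fun_prop)
      exact hClosed.closure_subset_iff.mpr hsub (hπnondeg x)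
  · -- part 3
    intro Φ hΦ
    have hsplit : ∀ (g : B' → B') (n m : ℕ) (a : Fin n → B') (a' : Fin m → B')
        (y : Fin n → X) (y' : Fin m → X),
        ∑ i : Fin (n + m), π (g (Fin.append a a' i)) (Fin.append y y' i)
          = ∑ i, π (g (a i)) (y i) + ∑ j, π (g (a' j)) (y' j) := by
      intro g n m a a' y y'
      rw [Fin.sum_univ_add]
      congr 1
      · exact Finset.sum_congr rfl fun i _ => by rw [Fin.append_left, Fin.append_left]
      · exact Finset.sum_congr rfl fun j _ => by rw [Fin.append_right, Fin.append_right]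
    -- well-definedness
    have hwd : ∀ (n m : ℕ) (a : Fin n → B') (y : Fin n → X) (a' : Fin m → B') (y' : Fin m → X),
        ∑ i, π (a i) (y i) = ∑ j, π (a' j) (y' j) →
        ∑ i, π (Φ (a i)) (y i) = ∑ j, π (Φ (a' j)) (y' j) := by
      intro n m a y a' y' h
      have hkey := key Φ hΦ (n + m) (Fin.append a a') (Fin.append y fun j => -y' j)
      have e1 := hsplit (fun x => Φ x) n m a a' y (fun j => -y' j)
      have e2 := hsplit (fun x => x) n m a a' y (fun j => -y' j)
      rw [e1, e2] at hkey
      have hneg : ∀ j, π (a' j) (-y' j) = -π (a' j) (y' j) := fun j => (π (a' j)).map_neg _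
      have hnegΦ : ∀ j, π (Φ (a' j)) (-y' j) = -π (Φ (a' j)) (y' j) :=
        fun j => (π (Φ (a' j))).map_neg _
      simp only [hneg, hnegΦ, Finset.sum_neg_distrib] at hkey
      rw [h, add_neg_cancel, norm_zero, mul_zero, ← sub_eq_add_neg] at hkey
      rw [← sub_eq_zero, ← norm_le_zero_iff]
      exact hkey
    -- the representability predicate and the map F
    let R : X → Prop := fun x =>
      ∃ p : Σ n : ℕ, (Fin n → B') × (Fin n → X), x = ∑ i, π (p.2.1 i) (p.2.2 i)
    let F : X → X := fun x =>
      if h : R x then ∑ i, π (Φ (h.choose.2.1 i)) (h.choose.2.2 i) else 0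
    have hF : ∀ (n : ℕ) (a : Fin n → B') (y : Fin n → X),
        F (∑ i, π (a i) (y i)) = ∑ i, π (Φ (a i)) (y i) := by
      intro n a y
      have hR : R (∑ i, π (a i) (y i)) := ⟨⟨n, a, y⟩, rfl⟩
      simp only [F, dif_pos hR]
      exact hwd _ _ _ _ _ _ hR.choose_spec.symm
    set D := Submodule.span ℂ S with hD
    let f : ↥D →ₗ[ℂ] X :=
      { toFun := fun x => F x.val
        map_add' := by
          rintro ⟨x, hx⟩ ⟨z, hz⟩
          obtain ⟨n, a, y, hxr⟩ := hrep x hx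
          obtain ⟨m, a', y', hzr⟩ := hrep z hz
          show F (x + z) = F x + F z
          have hsum : x + z = ∑ i : Fin (n + m), π (Fin.append a a' i) (Fin.append y y' i) := by
            rw [hsplit (fun x => x) n m a a' y y', hxr, hzr]
          rw [hsum, hxr, hzr]
          have := hsplit (fun x => Φ x) n m a a' y y'
          rw [hF, hF, hF, this]
        map_smul' := by
          rintro r ⟨x, hx⟩
          obtain ⟨n, a, y, hxr⟩ := hrep x hx
          show F (r • x) = r • F x
          have hsum : r • x = ∑ i, π (a i) (r • y i) := by
            rw [hxr, Finset.smul_sum]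
            exact Finset.sum_congr rfl fun i _ => ((π (a i)).map_smul r (y i)).symm
          rw [hsum, hxr, hF, hF, Finset.smul_sum]
          exact Finset.sum_congr rfl fun i _ => ((π (Φ (a i))).map_smul r (y i)) }
    have hfbound : ∀ x : ↥D, ‖f x‖ ≤ ‖Φ‖ * ‖x‖ := by
      rintro ⟨x, hx⟩
      obtain ⟨n, a, y, hxr⟩ := hrep x hx
      show ‖F x‖ ≤ ‖Φ‖ * ‖x‖
      rw [hxr, hF]
      exact key Φ hΦ n a y
    let fL : ↥D →L[ℂ] X := f.mkContinuous ‖Φ‖ hfbound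
    have hdense : DenseRange (D.subtypeL) := hπnondeg.denseRange_val
    let b : X →L[ℂ] X := fL.extend D.subtypeL
    have hb : ∀ (a : B') (y : X), b (π a y) = π (Φ a) y := by
      intro a y
      have hmem : π a y ∈ D := Submodule.subset_span ⟨a, y, rfl⟩
      have h1 : b (π a y) = fL ⟨π a y, hmem⟩ :=
        ContinuousLinearMap.extend_eq (f := fL) (e := D.subtypeL) hdense
          isUniformEmbedding_subtype_val.isUniformInducing ⟨π a y, hmem⟩
      rw [h1]
      show F (π a y) = π (Φ a) y
      have hr : π a y = ∑ i : Fin 1, π ((fun _ => a) i) ((fun _ => y) i) := by simp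
      rw [hr, hF]
      simp
    have hbΦ : ∀ a : B', π (Φ a) = b ∘L π a := by
      intro a
      ext y
      exact (hb a y).symm
    refine ⟨b, ⟨fun a => ⟨Φ a, (hbΦ a).symm⟩, hbΦ⟩, ?_⟩
    rintro b' ⟨-, hb'⟩
    refine ContinuousLinearMap.ext_on hπnondeg ?_
    rintro x ⟨a, y, rfl⟩
    show b' (π a y) = b (π a y)
    rw [hb a y]
    have := hb' a
    rw [this]
    rfl
end
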